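/- arXiv:1401.7908 — 10 statements merged into one kernel-verified Lean document; each statement's English description precedes it below -/
import Mathlib

section
/- Let X be an arbitrary set, let (x_n)_{n≥0} be a sequence of mutually distinct points of X, and let (a_n)_{n≥0} be real numbers with ∑_{n=0}^∞ |a_n| < ∞ and ∑_{n=0}^∞ a_n = 1. For a bounded function f : X → ℝ write f_n := f(x_n) and L(f) := ∑_{n=0}^∞ a_n f_n. Then for all bounded functions f, g : X → ℝ one has |L(f·g) − L(f)·L(g)| ≤ osc_L(f) · osc_L(g) · ∑_{0 ≤ n < m < ∞} |a_n a_m|, where osc_L(f) := sup{|f_n − f_m| : 0 ≤ n < m < ∞} and similarly for g. -/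
set_option maxHeartbeats 1000000 in
private lemma discrete_chebyshev_gruss_aux (a F G : ℕ → ℝ)
    (ha : Summable fun n => |a n|) (ha1 : (∑' n, a n) = 1)
    (CF CG : ℝ) (hFb : ∀ n, |F n| ≤ CF) (hGb : ∀ n, |G n| ≤ CG) :
    |(∑' n, a n * (F n * G n)) - (∑' n, a n * F n) * (∑' n, a n * G n)| ≤
      sSup {d : ℝ | ∃ n m : ℕ, n < m ∧ d = |F n - F m|} *
        sSup {d : ℝ | ∃ n m : ℕ, n < m ∧ d = |G n - G m|} *
        ∑' p : {q : ℕ × ℕ // q.1 < q.2}, |a p.1.1 * a p.1.2| := by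
  classical
  have hCF0 : 0 ≤ CF := le_trans (abs_nonneg _) (hFb 0)
  have hCG0 : 0 ≤ CG := le_trans (abs_nonneg _) (hGb 0)
  -- norm-summability of the basic sequences
  have hA : Summable fun n => ‖a n‖ := by simpa [Real.norm_eq_abs] using ha
  have hAF : Summable fun n => ‖a n * F n‖ := by
    refine Summable.of_nonneg_of_le (fun n => norm_nonneg _) (fun n => ?_) (ha.mul_left CF)
    rw [Real.norm_eq_abs, abs_mul, mul_comm]
    exact mul_le_mul_of_nonneg_right (hFb n) (abs_nonneg _)
  have hAG : Summable fun n => ‖a n * G n‖ := by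
    refine Summable.of_nonneg_of_le (fun n => norm_nonneg _) (fun n => ?_) (ha.mul_left CG)
    rw [Real.norm_eq_abs, abs_mul, mul_comm]
    exact mul_le_mul_of_nonneg_right (hGb n) (abs_nonneg _)
  have hAFG : Summable fun n => ‖a n * (F n * G n)‖ := by
    refine Summable.of_nonneg_of_le (fun n => norm_nonneg _) (fun n => ?_) (ha.mul_left (CF * CG))
    rw [Real.norm_eq_abs, abs_mul, mul_comm]
    refine mul_le_mul_of_nonneg_right ?_ (abs_nonneg _)
    rw [abs_mul]
    exact mul_le_mul (hFb n) (hGb n) (abs_nonneg _) hCF0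
  -- summability of the double product of |a|'s
  have habs2 : Summable fun p : ℕ × ℕ => |a p.1| * |a p.2| :=
    ha.mul_of_nonneg ha (fun n => abs_nonneg _) (fun n => abs_nonneg _)
  -- the antisymmetric kernel
  have hsh : Summable fun p : ℕ × ℕ =>
      a p.1 * a p.2 * ((F p.1 - F p.2) * (G p.1 - G p.2)) := by
    refine Summable.of_norm_bounded
      (habs2.mul_left ((2 * CF) * (2 * CG))) (fun p => ?_)
    have d1 : |F p.1 - F p.2| ≤ 2 * CF :=
      (abs_sub _ _).trans (by linarith [hFb p.1, hFb p.2])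
    have d2 : |G p.1 - G p.2| ≤ 2 * CG :=
      (abs_sub _ _).trans (by linarith [hGb p.1, hGb p.2])
    rw [Real.norm_eq_abs]
    calc |a p.1 * a p.2 * ((F p.1 - F p.2) * (G p.1 - G p.2))|
        = |a p.1| * |a p.2| * (|F p.1 - F p.2| * |G p.1 - G p.2|) := by
          rw [abs_mul, abs_mul, abs_mul]
      _ ≤ |a p.1| * |a p.2| * ((2 * CF) * (2 * CG)) := by
          refine mul_le_mul_of_nonneg_left ?_ (by positivity)
          exact mul_le_mul d1 d2 (abs_nonneg _) (by positivity)
      _ = (2 * CF) * (2 * CG) * (|a p.1| * |a p.2|) := by ring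
  -- the four product pieces
  have hu1 : Summable fun p : ℕ × ℕ => (a p.1 * (F p.1 * G p.1)) * a p.2 :=
    summable_mul_of_summable_norm (f := fun n => a n * (F n * G n)) (g := fun n => a n) hAFG hA
  have hu2 : Summable fun p : ℕ × ℕ => a p.1 * (a p.2 * (F p.2 * G p.2)) :=
    summable_mul_of_summable_norm (f := fun n => a n) (g := fun n => a n * (F n * G n)) hA hAFG
  have hu3 : Summable fun p : ℕ × ℕ => (a p.1 * F p.1) * (a p.2 * G p.2) :=
    summable_mul_of_summable_norm (f := fun n => a n * F n) (g := fun n => a n * G n) hAF hAG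
  have hu4 : Summable fun p : ℕ × ℕ => (a p.1 * G p.1) * (a p.2 * F p.2) :=
    summable_mul_of_summable_norm (f := fun n => a n * G n) (g := fun n => a n * F n) hAG hAF
  -- the expansion identity
  have key : (∑' p : ℕ × ℕ, a p.1 * a p.2 * ((F p.1 - F p.2) * (G p.1 - G p.2))) =
      2 * ((∑' n, a n * (F n * G n)) - (∑' n, a n * F n) * (∑' n, a n * G n)) := by
    have hfun : (fun p : ℕ × ℕ => a p.1 * a p.2 * ((F p.1 - F p.2) * (G p.1 - G p.2)))
        = fun p : ℕ × ℕ =>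
        ((a p.1 * (F p.1 * G p.1)) * a p.2 + a p.1 * (a p.2 * (F p.2 * G p.2)))
          - (a p.1 * F p.1) * (a p.2 * G p.2) - (a p.1 * G p.1) * (a p.2 * F p.2) := by
      funext p; ring
    rw [hfun, Summable.tsum_sub (((hu1.add hu2).sub hu3)) hu4, Summable.tsum_sub (hu1.add hu2) hu3,
      Summable.tsum_add hu1 hu2,
      ← tsum_mul_tsum_of_summable_norm (f := fun n => a n * (F n * G n)) (g := fun n => a n) hAFG hA,
      ← tsum_mul_tsum_of_summable_norm (f := fun n => a n) (g := fun n => a n * (F n * G n)) hA hAFG,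
      ← tsum_mul_tsum_of_summable_norm (f := fun n => a n * F n) (g := fun n => a n * G n) hAF hAG,
      ← tsum_mul_tsum_of_summable_norm (f := fun n => a n * G n) (g := fun n => a n * F n) hAG hAF, ha1]
    ring
  -- split into the lower and upper triangle
  set S : Set (ℕ × ℕ) := {q | q.1 < q.2} with hSdef
  have hsplit : (∑' p : S, a (p : ℕ × ℕ).1 * a (p : ℕ × ℕ).2 *
        ((F (p : ℕ × ℕ).1 - F (p : ℕ × ℕ).2) * (G (p : ℕ × ℕ).1 - G (p : ℕ × ℕ).2)))
      + (∑' p : ↥Sᶜ, a (p : ℕ × ℕ).1 * a (p : ℕ × ℕ).2 *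
        ((F (p : ℕ × ℕ).1 - F (p : ℕ × ℕ).2) * (G (p : ℕ × ℕ).1 - G (p : ℕ × ℕ).2)))
      = ∑' p : ℕ × ℕ, a p.1 * a p.2 * ((F p.1 - F p.2) * (G p.1 - G p.2)) :=
    Summable.tsum_add_tsum_compl (hsh.subtype S) (hsh.subtype Sᶜ)
  have hswap : (∑' p : ↥Sᶜ, a (p : ℕ × ℕ).1 * a (p : ℕ × ℕ).2 *
        ((F (p : ℕ × ℕ).1 - F (p : ℕ × ℕ).2) * (G (p : ℕ × ℕ).1 - G (p : ℕ × ℕ).2)))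
      = ∑' p : S, a (p : ℕ × ℕ).1 * a (p : ℕ × ℕ).2 *
        ((F (p : ℕ × ℕ).1 - F (p : ℕ × ℕ).2) * (G (p : ℕ × ℕ).1 - G (p : ℕ × ℕ).2)) := by
    have hi : Function.Injective (fun p : S => (⟨((p : ℕ × ℕ).2, (p : ℕ × ℕ).1), by
        have := p.2; simp only [hSdef, Set.mem_compl_iff, Set.mem_setOf_eq] at this ⊢
        omega⟩ : ↥Sᶜ)) := by
      rintro ⟨⟨n, m⟩, hp⟩ ⟨⟨n', m'⟩, hp'⟩ hpq
      simp only [Subtype.mk.injEq, Prod.mk.injEq] at hpq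
      simp [hpq.1, hpq.2]
    have hsupp : Function.support (fun q : ↥Sᶜ => a (q : ℕ × ℕ).1 * a (q : ℕ × ℕ).2 *
          ((F (q : ℕ × ℕ).1 - F (q : ℕ × ℕ).2) * (G (q : ℕ × ℕ).1 - G (q : ℕ × ℕ).2))) ⊆
        Set.range (fun p : S => (⟨((p : ℕ × ℕ).2, (p : ℕ × ℕ).1), by
          have := p.2; simp only [hSdef, Set.mem_compl_iff, Set.mem_setOf_eq] at this ⊢
          omega⟩ : ↥Sᶜ)) := by
      rintro ⟨⟨n, m⟩, hq⟩ hne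
      simp only [hSdef, Set.mem_compl_iff, Set.mem_setOf_eq, not_lt] at hq
      have hnm : m < n := by
        rcases lt_or_eq_of_le hq with h' | h'
        · exact h'
        · exfalso; apply hne; simp [h']
      exact ⟨⟨(m, n), hnm⟩, rfl⟩
    rw [← Function.Injective.tsum_eq hi hsupp]
    refine tsum_congr fun p => ?_
    ring
  have hdiff : (∑' n, a n * (F n * G n)) - (∑' n, a n * F n) * (∑' n, a n * G n)
      = ∑' p : S, a (p : ℕ × ℕ).1 * a (p : ℕ × ℕ).2 *
        ((F (p : ℕ × ℕ).1 - F (p : ℕ × ℕ).2) * (G (p : ℕ × ℕ).1 - G (p : ℕ × ℕ).2)) := by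
    have h2 := hsplit
    rw [hswap, key] at h2
    linarith
  -- oscillation bounds
  have bddF : BddAbove {d : ℝ | ∃ n m : ℕ, n < m ∧ d = |F n - F m|} := by
    refine ⟨2 * CF, ?_⟩
    rintro d ⟨n, m, hnm, rfl⟩
    exact (abs_sub _ _).trans (by linarith [hFb n, hFb m])
  have bddG : BddAbove {d : ℝ | ∃ n m : ℕ, n < m ∧ d = |G n - G m|} := by
    refine ⟨2 * CG, ?_⟩
    rintro d ⟨n, m, hnm, rfl⟩
    exact (abs_sub _ _).trans (by linarith [hGb n, hGb m])
  set oF : ℝ := sSup {d : ℝ | ∃ n m : ℕ, n < m ∧ d = |F n - F m|} with hoF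
  set oG : ℝ := sSup {d : ℝ | ∃ n m : ℕ, n < m ∧ d = |G n - G m|} with hoG
  have hoF0 : 0 ≤ oF :=
    le_trans (abs_nonneg _) (le_csSup bddF ⟨0, 1, by norm_num, rfl⟩)
  have hoG0 : 0 ≤ oG :=
    le_trans (abs_nonneg _) (le_csSup bddG ⟨0, 1, by norm_num, rfl⟩)
  -- summability of the bound on the triangle
  have habs2' : Summable fun p : ℕ × ℕ => |a p.1 * a p.2| := by
    refine habs2.congr fun p => ?_
    rw [abs_mul]
  have hw : Summable fun p : S => |a (p : ℕ × ℕ).1 * a (p : ℕ × ℕ).2| := habs2'.subtype S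
  -- final estimate
  rw [hdiff]
  have step1 : |∑' p : S, a (p : ℕ × ℕ).1 * a (p : ℕ × ℕ).2 *
        ((F (p : ℕ × ℕ).1 - F (p : ℕ × ℕ).2) * (G (p : ℕ × ℕ).1 - G (p : ℕ × ℕ).2))|
      ≤ ∑' p : S, |a (p : ℕ × ℕ).1 * a (p : ℕ × ℕ).2 *
        ((F (p : ℕ × ℕ).1 - F (p : ℕ × ℕ).2) * (G (p : ℕ × ℕ).1 - G (p : ℕ × ℕ).2))| := by
    simpa only [Real.norm_eq_abs] using
      norm_tsum_le_tsum_norm (f := fun p : S => a (p : ℕ × ℕ).1 * a (p : ℕ × ℕ).2 *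
        ((F (p : ℕ × ℕ).1 - F (p : ℕ × ℕ).2) * (G (p : ℕ × ℕ).1 - G (p : ℕ × ℕ).2)))
        (by simp only [Real.norm_eq_abs]; exact (hsh.subtype S).abs)
  have step2 : (∑' p : S, |a (p : ℕ × ℕ).1 * a (p : ℕ × ℕ).2 *
        ((F (p : ℕ × ℕ).1 - F (p : ℕ × ℕ).2) * (G (p : ℕ × ℕ).1 - G (p : ℕ × ℕ).2))|)
      ≤ ∑' p : S, oF * oG * |a (p : ℕ × ℕ).1 * a (p : ℕ × ℕ).2| := by
    refine Summable.tsum_le_tsum (fun p => ?_) ((hsh.subtype S).abs) (hw.mul_left _)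
    have hFle : |F (p : ℕ × ℕ).1 - F (p : ℕ × ℕ).2| ≤ oF :=
      le_csSup bddF ⟨(p : ℕ × ℕ).1, (p : ℕ × ℕ).2, p.2, rfl⟩
    have hGle : |G (p : ℕ × ℕ).1 - G (p : ℕ × ℕ).2| ≤ oG :=
      le_csSup bddG ⟨(p : ℕ × ℕ).1, (p : ℕ × ℕ).2, p.2, rfl⟩
    calc |a (p : ℕ × ℕ).1 * a (p : ℕ × ℕ).2 *
          ((F (p : ℕ × ℕ).1 - F (p : ℕ × ℕ).2) * (G (p : ℕ × ℕ).1 - G (p : ℕ × ℕ).2))|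
        = |a (p : ℕ × ℕ).1 * a (p : ℕ × ℕ).2| *
            (|F (p : ℕ × ℕ).1 - F (p : ℕ × ℕ).2| * |G (p : ℕ × ℕ).1 - G (p : ℕ × ℕ).2|) := by
          rw [abs_mul (a (p : ℕ × ℕ).1 * a (p : ℕ × ℕ).2),
            abs_mul (F (p : ℕ × ℕ).1 - F (p : ℕ × ℕ).2)]
      _ = (|F (p : ℕ × ℕ).1 - F (p : ℕ × ℕ).2| * |G (p : ℕ × ℕ).1 - G (p : ℕ × ℕ).2|) *
            |a (p : ℕ × ℕ).1 * a (p : ℕ × ℕ).2| := mul_comm _ _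
      _ ≤ (oF * oG) * |a (p : ℕ × ℕ).1 * a (p : ℕ × ℕ).2| := by
          refine mul_le_mul_of_nonneg_right ?_ (abs_nonneg _)
          exact mul_le_mul hFle hGle (abs_nonneg _) hoF0
      _ = oF * oG * |a (p : ℕ × ℕ).1 * a (p : ℕ × ℕ).2| := by ring
  calc |∑' p : S, a (p : ℕ × ℕ).1 * a (p : ℕ × ℕ).2 *
        ((F (p : ℕ × ℕ).1 - F (p : ℕ × ℕ).2) * (G (p : ℕ × ℕ).1 - G (p : ℕ × ℕ).2))|
      ≤ ∑' p : S, oF * oG * |a (p : ℕ × ℕ).1 * a (p : ℕ × ℕ).2| := step1.trans step2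
    _ = oF * oG * ∑' p : S, |a (p : ℕ × ℕ).1 * a (p : ℕ × ℕ).2| := tsum_mul_left

/-- Chebyshev-Grüss-type inequality for a discrete linear (not necessarily positive)
functional `L f = ∑' n, a n * f (x n)` on bounded functions. -/
theorem discrete_chebyshev_gruss {X : Type*} (x : ℕ → X) (hx : Function.Injective x)
    (a : ℕ → ℝ) (ha : Summable fun n => |a n|) (ha1 : (∑' n, a n) = 1)
    (f g : X → ℝ) (hf : ∃ C, ∀ y, |f y| ≤ C) (hg : ∃ C, ∀ y, |g y| ≤ C) :
    |(∑' n, a n * (f (x n) * g (x n))) -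
        (∑' n, a n * f (x n)) * (∑' n, a n * g (x n))| ≤
      sSup {d : ℝ | ∃ n m : ℕ, n < m ∧ d = |f (x n) - f (x m)|} *
        sSup {d : ℝ | ∃ n m : ℕ, n < m ∧ d = |g (x n) - g (x m)|} *
        ∑' p : {q : ℕ × ℕ // q.1 < q.2}, |a p.1.1 * a p.1.2| := by
  obtain ⟨CF, hCF⟩ := hf
  obtain ⟨CG, hCG⟩ := hg
  exact discrete_chebyshev_gruss_aux a (fun n => f (x n)) (fun n => g (x n)) ha ha1
    CF CG (fun n => hCF (x n)) (fun n => hCG (x n))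
end

section
/- Let X be an arbitrary set, let (x_n)_{n≥0} be a sequence of mutually distinct points of X, and let (a_n)_{n≥0} be real numbers with a_n ≥ 0 for all n, ∑_{n=0}^∞ a_n = 1. Define L(f) := ∑_{n=0}^∞ a_n f(x_n) for bounded f : X → ℝ. Then for all bounded functions f, g : X → ℝ one has |L(f·g) − L(f)·L(g)| ≤ (1/2)·(1 − ∑_{n=0}^∞ a_n²) · osc_L(f) · osc_L(g), where osc_L(f) := sup{|f(x_n) − f(x_m)| : 0 ≤ n < m < ∞} and similarly for g. -/
set_option maxHeartbeats 8000000 in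
/-- Chebyshev-Grüss-type inequality for a discrete positive linear functional
`L f = ∑' n, a n * f (x n)` with `a n ≥ 0` and `∑ a n = 1`. -/
theorem discrete_chebyshev_gruss_positive {X : Type*} (x : ℕ → X) (hx : Function.Injective x)
    (a : ℕ → ℝ) (hapos : ∀ n, 0 ≤ a n) (ha : Summable a) (ha1 : (∑' n, a n) = 1)
    (f g : X → ℝ) (hf : ∃ C, ∀ y, |f y| ≤ C) (hg : ∃ C, ∀ y, |g y| ≤ C) :
    |(∑' n, a n * (f (x n) * g (x n))) -
        (∑' n, a n * f (x n)) * (∑' n, a n * g (x n))| ≤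
      (1 / 2) * (1 - ∑' n, (a n) ^ 2) *
        sSup {d : ℝ | ∃ n m : ℕ, n < m ∧ d = |f (x n) - f (x m)|} *
        sSup {d : ℝ | ∃ n m : ℕ, n < m ∧ d = |g (x n) - g (x m)|} := by
  obtain ⟨Cf, hCf⟩ := hf
  obtain ⟨Cg, hCg⟩ := hg
  set F : ℕ → ℝ := fun n => f (x n) with hF
  set G : ℕ → ℝ := fun n => g (x n) with hG
  have hCf0 : 0 ≤ Cf := le_trans (abs_nonneg _) (hCf (x 0))
  have hCg0 : 0 ≤ Cg := le_trans (abs_nonneg _) (hCg (x 0))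
  -- summability lemmas
  have key : ∀ (h : ℕ → ℝ) (C : ℝ), (∀ n, |h n| ≤ C) →
      Summable (fun n => a n * h n) := by
    intro h C hC
    apply Summable.of_norm_bounded (ha.mul_right C)
    intro n
    rw [Real.norm_eq_abs, abs_mul, abs_of_nonneg (hapos n)]
    exact mul_le_mul_of_nonneg_left (hC n) (hapos n)
  have huf : Summable (fun n => a n * F n) := key F Cf (fun n => hCf (x n))
  have hug : Summable (fun n => a n * G n) := key G Cg (fun n => hCg (x n))
  have hufg : Summable (fun n => a n * (F n * G n)) := by
    refine key _ (Cf * Cg) fun n => ?_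
    rw [abs_mul]
    exact mul_le_mul (hCf (x n)) (hCg (x n)) (abs_nonneg _) hCf0
  -- oscillations
  set Sf : Set ℝ := {d : ℝ | ∃ n m : ℕ, n < m ∧ d = |F n - F m|} with hSf
  set Sg : Set ℝ := {d : ℝ | ∃ n m : ℕ, n < m ∧ d = |G n - G m|} with hSg
  set Of := sSup Sf with hOf
  set Og := sSup Sg with hOg
  have hSfbdd : BddAbove Sf := by
    refine ⟨2 * Cf, ?_⟩
    rintro d ⟨n, m, _, rfl⟩
    calc |F n - F m| ≤ |F n| + |F m| := abs_sub _ _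
      _ ≤ Cf + Cf := add_le_add (hCf _) (hCf _)
      _ = 2 * Cf := by ring
  have hSgbdd : BddAbove Sg := by
    refine ⟨2 * Cg, ?_⟩
    rintro d ⟨n, m, _, rfl⟩
    calc |G n - G m| ≤ |G n| + |G m| := abs_sub _ _
      _ ≤ Cg + Cg := add_le_add (hCg _) (hCg _)
      _ = 2 * Cg := by ring
  have hOf0 : 0 ≤ Of :=
    le_trans (abs_nonneg _) (le_csSup hSfbdd ⟨0, 1, zero_lt_one, rfl⟩)
  have hOg0 : 0 ≤ Og :=
    le_trans (abs_nonneg _) (le_csSup hSgbdd ⟨0, 1, zero_lt_one, rfl⟩)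
  have hOfle : ∀ n m : ℕ, n ≠ m → |F n - F m| ≤ Of := by
    intro n m hnm
    rcases lt_or_gt_of_ne hnm with h | h
    · exact le_csSup hSfbdd ⟨n, m, h, rfl⟩
    · rw [abs_sub_comm]; exact le_csSup hSfbdd ⟨m, n, h, rfl⟩
  have hOgle : ∀ n m : ℕ, n ≠ m → |G n - G m| ≤ Og := by
    intro n m hnm
    rcases lt_or_gt_of_ne hnm with h | h
    · exact le_csSup hSgbdd ⟨n, m, h, rfl⟩
    · rw [abs_sub_comm]; exact le_csSup hSgbdd ⟨m, n, h, rfl⟩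
  -- the double sum
  set T : ℕ × ℕ → ℝ :=
    fun p => a p.1 * a p.2 * ((F p.1 - F p.2) * (G p.1 - G p.2)) with hT
  set b : ℕ × ℕ → ℝ :=
    fun p => if p.1 = p.2 then 0 else a p.1 * a p.2 * (Of * Og) with hb
  have haa : Summable (fun p : ℕ × ℕ => a p.1 * a p.2) :=
    ha.mul_of_nonneg ha hapos hapos
  have hbnn : ∀ p, 0 ≤ b p := by
    intro p; simp only [hb]
    split
    · exact le_refl 0
    · exact mul_nonneg (mul_nonneg (hapos _) (hapos _)) (mul_nonneg hOf0 hOg0)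
  have hble : ∀ p, b p ≤ a p.1 * a p.2 * (Of * Og) := by
    intro p; simp only [hb]
    split
    · exact mul_nonneg (mul_nonneg (hapos _) (hapos _)) (mul_nonneg hOf0 hOg0)
    · exact le_refl _
  have hbsum : Summable b :=
    Summable.of_nonneg_of_le hbnn hble (haa.mul_right (Of * Og))
  have hTle : ∀ p, ‖T p‖ ≤ b p := by
    intro p
    rcases eq_or_ne p.1 p.2 with h | h
    · simp [hT, hb, h]
    · simp only [hb, if_neg h, hT, Real.norm_eq_abs, abs_mul,
        abs_of_nonneg (hapos p.1), abs_of_nonneg (hapos p.2)]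
      calc a p.1 * a p.2 * (|F p.1 - F p.2| * |G p.1 - G p.2|)
          = a p.1 * (a p.2 * (|F p.1 - F p.2| * |G p.1 - G p.2|)) := by ring
        _
          ≤ a p.1 * (a p.2 * (Of * Og)) := by
            refine mul_le_mul_of_nonneg_left
              (mul_le_mul_of_nonneg_left ?_ (hapos _)) (hapos _)
            exact mul_le_mul (hOfle _ _ h) (hOgle _ _ h) (abs_nonneg _) hOf0
        _ = a p.1 * a p.2 * (Of * Og) := by ring
  have hTnormsum : Summable (fun p => ‖T p‖) :=
    Summable.of_nonneg_of_le (fun p => norm_nonneg _) hTle hbsum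
  -- norms of summands
  have habs : ∀ (u : ℕ → ℝ), Summable u → Summable (fun n => ‖u n‖) :=
    fun u hu => hu.abs
  -- the four pieces
  set A := ∑' n, a n * (F n * G n) with hA
  set B := ∑' n, a n * F n with hB
  set C := ∑' n, a n * G n with hC
  have h1 : (∑' p : ℕ × ℕ, (a p.1 * (F p.1 * G p.1)) * a p.2) = A := by
    rw [← tsum_mul_tsum_of_summable_norm (habs _ hufg) (habs _ ha), ha1, mul_one]
  have h4 : (∑' p : ℕ × ℕ, a p.1 * (a p.2 * (F p.2 * G p.2))) = A := by
    rw [← tsum_mul_tsum_of_summable_norm (habs _ ha) (habs _ hufg), ha1, one_mul]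
  have h2 : (∑' p : ℕ × ℕ, (a p.1 * F p.1) * (a p.2 * G p.2)) = B * C :=
    (tsum_mul_tsum_of_summable_norm (habs _ huf) (habs _ hug)).symm
  have h3 : (∑' p : ℕ × ℕ, (a p.1 * G p.1) * (a p.2 * F p.2)) = C * B :=
    (tsum_mul_tsum_of_summable_norm (habs _ hug) (habs _ huf)).symm
  have s1 : Summable (fun p : ℕ × ℕ => (a p.1 * (F p.1 * G p.1)) * a p.2) :=
    summable_mul_of_summable_norm (habs _ hufg) (habs _ ha)
  have s4 : Summable (fun p : ℕ × ℕ => a p.1 * (a p.2 * (F p.2 * G p.2))) :=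
    summable_mul_of_summable_norm (habs _ ha) (habs _ hufg)
  have s2 : Summable (fun p : ℕ × ℕ => (a p.1 * F p.1) * (a p.2 * G p.2)) :=
    summable_mul_of_summable_norm (habs _ huf) (habs _ hug)
  have s3 : Summable (fun p : ℕ × ℕ => (a p.1 * G p.1) * (a p.2 * F p.2)) :=
    summable_mul_of_summable_norm (habs _ hug) (habs _ huf)
  have hTeq : T = fun p : ℕ × ℕ =>
      ((a p.1 * (F p.1 * G p.1)) * a p.2 + a p.1 * (a p.2 * (F p.2 * G p.2))) -
      ((a p.1 * F p.1) * (a p.2 * G p.2) + (a p.1 * G p.1) * (a p.2 * F p.2)) := by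
    funext p; simp only [hT]; ring
  have hS : (∑' p, T p) = 2 * (A - B * C) := by
    rw [hTeq, Summable.tsum_sub (s1.add s4) (s2.add s3), Summable.tsum_add s1 s4, Summable.tsum_add s2 s3,
      h1, h2, h3, h4]
    ring
  -- diagonal
  set diag : ℕ × ℕ → ℝ :=
    fun p => if p.1 = p.2 then a p.1 * a p.2 * (Of * Og) else 0 with hdiag
  have hdiagnn : ∀ p, 0 ≤ diag p := by
    intro p; simp only [hdiag]
    split
    · exact mul_nonneg (mul_nonneg (hapos _) (hapos _)) (mul_nonneg hOf0 hOg0)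
    · exact le_refl 0
  have hdiagle : ∀ p, diag p ≤ a p.1 * a p.2 * (Of * Og) := by
    intro p; simp only [hdiag]
    split
    · exact le_refl _
    · exact mul_nonneg (mul_nonneg (hapos _) (hapos _)) (mul_nonneg hOf0 hOg0)
  have hdiagsum : Summable diag :=
    Summable.of_nonneg_of_le hdiagnn hdiagle (haa.mul_right (Of * Og))
  have hi : Function.Injective (fun n : ℕ => ((n, n) : ℕ × ℕ)) :=
    fun n m h => congrArg Prod.fst h
  have hdiagval : (∑' p, diag p) = (∑' n, (a n) ^ 2) * (Of * Og) := by
    rw [← hi.tsum_eq (f := diag)]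
    · simp only [hdiag, if_pos rfl]
      rw [← tsum_mul_right]
      congr 1
      funext n
      ring
    · intro p hp
      rcases eq_or_ne p.1 p.2 with h | h
      · exact Set.mem_range.mpr ⟨p.1, by ext <;> simp [h]⟩
      · exact absurd (by simp [hdiag, if_neg h]) hp
  have haaval : (∑' p : ℕ × ℕ, a p.1 * a p.2) = 1 := by
    rw [← tsum_mul_tsum_of_summable_norm (habs _ ha) (habs _ ha), ha1, mul_one]
  have hbval : (∑' p, b p) = (1 - ∑' n, (a n) ^ 2) * (Of * Og) := by
    have hbeq : b = fun p => a p.1 * a p.2 * (Of * Og) - diag p := by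
      funext p
      simp only [hb, hdiag]
      split <;> ring
    rw [hbeq, Summable.tsum_sub (haa.mul_right (Of * Og)) hdiagsum, tsum_mul_right,
      haaval, hdiagval]
    ring
  -- put it together
  have hmain : |∑' p, T p| ≤ ∑' p, b p := by
    calc |∑' p, T p| ≤ ∑' p, ‖T p‖ := norm_tsum_le_tsum_norm hTnormsum
      _ ≤ ∑' p, b p := Summable.tsum_le_tsum hTle hTnormsum hbsum
  rw [hS] at hmain
  rw [hbval] at hmain
  rw [abs_mul, abs_two] at hmain
  have : |A - B * C| ≤ (1 / 2) * ((1 - ∑' n, (a n) ^ 2) * (Of * Og)) := by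
    linarith
  calc |A - B * C| ≤ (1 / 2) * ((1 - ∑' n, (a n) ^ 2) * (Of * Og)) := this
    _ = (1 / 2) * (1 - ∑' n, (a n) ^ 2) * Of * Og := by ring
end

section
/- Let 0 ≤ a ≤ 1 and define the linear functional L on C[0,1] by L(f) := a·∫_0^1 f(t) dt + (1−a)·f(1/2). Then for all continuous functions f, g : [0,1] → ℝ one has |L(f·g) − L(f)·L(g)| ≤ (1/2)·a·(2−a)·osc(f)·osc(g), where osc(f) := sup{|f(x) − f(y)| : x, y ∈ [0,1]} and similarly for g. -/
open MeasureTheory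

lemma osc_facts (h : ℝ → ℝ) (hh : ContinuousOn h (Set.Icc 0 1)) :
    0 ≤ sSup {d : ℝ | ∃ s ∈ Set.Icc (0:ℝ) 1, ∃ t ∈ Set.Icc (0:ℝ) 1, d = |h s - h t|} ∧
    ∀ s ∈ Set.Icc (0:ℝ) 1, ∀ t ∈ Set.Icc (0:ℝ) 1,
      |h s - h t| ≤ sSup {d : ℝ | ∃ s ∈ Set.Icc (0:ℝ) 1, ∃ t ∈ Set.Icc (0:ℝ) 1, d = |h s - h t|} := by
  obtain ⟨M, hM⟩ := isCompact_Icc.exists_bound_of_continuousOn hh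
  have hbdd : BddAbove {d : ℝ | ∃ s ∈ Set.Icc (0:ℝ) 1, ∃ t ∈ Set.Icc (0:ℝ) 1, d = |h s - h t|} := by
    refine ⟨2 * M, ?_⟩
    rintro d ⟨s, hs, t, ht, rfl⟩
    calc |h s - h t| ≤ |h s| + |h t| := abs_sub _ _
      _ ≤ M + M := add_le_add (hM s hs) (hM t ht)
      _ = 2 * M := by ring
  have hle : ∀ s ∈ Set.Icc (0:ℝ) 1, ∀ t ∈ Set.Icc (0:ℝ) 1, |h s - h t| ≤
      sSup {d : ℝ | ∃ s ∈ Set.Icc (0:ℝ) 1, ∃ t ∈ Set.Icc (0:ℝ) 1, d = |h s - h t|} :=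
    fun s hs t ht => le_csSup hbdd ⟨s, hs, t, ht, rfl⟩
  refine ⟨?_, hle⟩
  have := hle 0 ⟨le_rfl, zero_le_one⟩ 0 ⟨le_rfl, zero_le_one⟩
  simpa using this

/-- Chebyshev-Grüss-type inequality for the functional
`L f = a ∫₀¹ f + (1-a) f(1/2)` on `C[0,1]`. -/
theorem chebyshev_gruss_mixed_functional (a : ℝ) (ha0 : 0 ≤ a) (ha1 : a ≤ 1)
    (L : (ℝ → ℝ) → ℝ)
    (hL : ∀ f : ℝ → ℝ, L f = a * (∫ t in (0:ℝ)..1, f t) + (1 - a) * f (1 / 2))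
    (f g : ℝ → ℝ) (hf : ContinuousOn f (Set.Icc 0 1)) (hg : ContinuousOn g (Set.Icc 0 1)) :
    |L (fun t => f t * g t) - L f * L g| ≤
      (1 / 2) * (a * (2 - a)) *
        sSup {d : ℝ | ∃ s ∈ Set.Icc (0:ℝ) 1, ∃ t ∈ Set.Icc (0:ℝ) 1, d = |f s - f t|} *
        sSup {d : ℝ | ∃ s ∈ Set.Icc (0:ℝ) 1, ∃ t ∈ Set.Icc (0:ℝ) 1, d = |g s - g t|} := by
  set Of := sSup {d : ℝ | ∃ s ∈ Set.Icc (0:ℝ) 1, ∃ t ∈ Set.Icc (0:ℝ) 1, d = |f s - f t|} with hOf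
  set Og := sSup {d : ℝ | ∃ s ∈ Set.Icc (0:ℝ) 1, ∃ t ∈ Set.Icc (0:ℝ) 1, d = |g s - g t|} with hOg
  obtain ⟨hOf0, hfle⟩ := osc_facts f hf
  obtain ⟨hOg0, hgle⟩ := osc_facts g hg
  have huIcc : Set.uIcc (0:ℝ) 1 = Set.Icc 0 1 := Set.uIcc_of_le zero_le_one
  have hif : IntervalIntegrable f volume 0 1 := by
    apply ContinuousOn.intervalIntegrable; rwa [huIcc]
  have hig : IntervalIntegrable g volume 0 1 := by
    apply ContinuousOn.intervalIntegrable; rwa [huIcc]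
  have hifg : IntervalIntegrable (fun x => f x * g x) volume 0 1 := by
    apply ContinuousOn.intervalIntegrable; rw [huIcc]; exact hf.mul hg
  set If := ∫ t in (0:ℝ)..1, f t with hIf
  set Ig := ∫ t in (0:ℝ)..1, g t with hIg
  set Ifg := ∫ t in (0:ℝ)..1, f t * g t with hIfg
  have hsub : Set.uIoc (0:ℝ) 1 ⊆ Set.Icc 0 1 := by
    rw [Set.uIoc_of_le zero_le_one]; exact Set.Ioc_subset_Icc_self
  -- pointwise identity
  have heq : ∀ c d : ℝ, (∫ x in (0:ℝ)..1, (f x - c) * (g x - d)) =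
      Ifg - d * If - c * Ig + c * d := by
    intro c d
    have : (fun x => (f x - c) * (g x - d)) =
        fun x => (f x * g x - f x * d - c * g x) + c * d := by
      funext x; ring
    rw [this, intervalIntegral.integral_add ((hifg.sub (hif.mul_const d)).sub (hig.const_mul c))
          intervalIntegrable_const,
        intervalIntegral.integral_sub (hifg.sub (hif.mul_const d)) (hig.const_mul c),
        intervalIntegral.integral_sub hifg (hif.mul_const d),
        intervalIntegral.integral_mul_const, intervalIntegral.integral_const_mul,
        intervalIntegral.integral_const]
    simp only [← hIf, ← hIg, ← hIfg, smul_eq_mul]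
    ring
  -- pointwise bound
  have hbnd : ∀ y ∈ Set.Icc (0:ℝ) 1,
      |(∫ x in (0:ℝ)..1, (f x - f y) * (g x - g y))| ≤ Of * Og := by
    intro y hy
    have := intervalIntegral.norm_integral_le_of_norm_le_const
      (C := Of * Og) (f := fun x => (f x - f y) * (g x - g y)) (a := (0:ℝ)) (b := 1) ?_
    · simpa using this
    · intro x hx
      have hx' := hsub hx
      rw [Real.norm_eq_abs, abs_mul]
      exact mul_le_mul (hfle x hx' y hy) (hgle x hx' y hy) (abs_nonneg _) hOf0
  -- bound on B
  have hB : |Ifg - g (1/2) * If - f (1/2) * Ig + f (1/2) * g (1/2)| ≤ Of * Og := by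
    rw [← heq (f (1/2)) (g (1/2))]
    exact hbnd (1/2) ⟨by norm_num, by norm_num⟩
  -- the symmetrization identity for A
  have hicont : ∀ c : ℝ, IntervalIntegrable (fun y => c - g y * If - f y * Ig + f y * g y)
      volume 0 1 := fun c =>
    ((intervalIntegrable_const.sub (hig.mul_const If)).sub (hif.mul_const Ig)).add hifg
  have hAeq : (∫ y in (0:ℝ)..1, (Ifg - g y * If - f y * Ig + f y * g y)) =
      2 * (Ifg - If * Ig) := by
    have : (fun y => Ifg - g y * If - f y * Ig + f y * g y) =
        fun y => (Ifg + f y * g y) - (g y * If + f y * Ig) := by funext y; ring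
    rw [this, intervalIntegral.integral_sub (intervalIntegrable_const.add hifg)
          ((hig.mul_const If).add (hif.mul_const Ig)),
        intervalIntegral.integral_add intervalIntegrable_const hifg,
        intervalIntegral.integral_add (hig.mul_const If) (hif.mul_const Ig),
        intervalIntegral.integral_mul_const, intervalIntegral.integral_mul_const,
        intervalIntegral.integral_const]
    simp only [← hIf, ← hIg, ← hIfg, smul_eq_mul]
    ring
  have hA : |Ifg - If * Ig| ≤ 1 / 2 * (Of * Og) := by
    have hb2 : |(∫ y in (0:ℝ)..1, (Ifg - g y * If - f y * Ig + f y * g y))| ≤ Of * Og := by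
      have := intervalIntegral.norm_integral_le_of_norm_le_const
        (C := Of * Og) (f := fun y => Ifg - g y * If - f y * Ig + f y * g y) (a := (0:ℝ)) (b := 1) ?_
      · simpa using this
      · intro y hy
        have hy' := hsub hy
        rw [Real.norm_eq_abs]
        show |Ifg - g y * If - f y * Ig + f y * g y| ≤ Of * Og
        rw [← heq (f y) (g y)]
        exact hbnd y hy'
    rw [hAeq] at hb2
    rw [abs_mul, abs_two] at hb2
    linarith [abs_nonneg (Ifg - If * Ig)]
  -- final algebra
  rw [hL, hL, hL]
  have hkey : a * Ifg + (1 - a) * (f (1/2) * g (1/2)) -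
      (a * If + (1 - a) * f (1/2)) * (a * Ig + (1 - a) * g (1/2)) =
      a * a * (Ifg - If * Ig) +
      a * (1 - a) * (Ifg - g (1/2) * If - f (1/2) * Ig + f (1/2) * g (1/2)) := by ring
  simp only [← hIf, ← hIg, ← hIfg]
  rw [hkey]
  calc |a * a * (Ifg - If * Ig) + a * (1 - a) *
        (Ifg - g (1/2) * If - f (1/2) * Ig + f (1/2) * g (1/2))|
      ≤ a * a * |Ifg - If * Ig| + a * (1 - a) *
        |Ifg - g (1/2) * If - f (1/2) * Ig + f (1/2) * g (1/2)| := by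
        refine (abs_add_le _ _).trans ?_
        rw [abs_mul, abs_mul, abs_mul, abs_mul, abs_of_nonneg ha0,
            abs_of_nonneg (show (0:ℝ) ≤ 1 - a by linarith)]
    _ ≤ a * a * (1 / 2 * (Of * Og)) + a * (1 - a) * (Of * Og) := by
        have h1 := mul_le_mul_of_nonneg_left hA (mul_nonneg ha0 ha0)
        have h2 := mul_le_mul_of_nonneg_left hB
          (mul_nonneg ha0 (show (0:ℝ) ≤ 1 - a by linarith))
        linarith
    _ = 1 / 2 * (a * (2 - a)) * Of * Og := by ring
end

section
/- Let n ≥ 1, and for f : [0,1] → ℝ let B_n f(x) := ∑_{k=0}^n f(k/n)·b_{n,k}(x), where b_{n,k}(x) := C(n,k) x^k (1−x)^{n−k} is the k-th Bernstein basis polynomial. Then for all bounded functions f, g : [0,1] → ℝ and all x ∈ [0,1], |B_n(f·g)(x) − B_n f(x)·B_n g(x)| ≤ (1/2)·(1 − ∑_{k=0}^n b_{n,k}(x)²)·osc_{B_n}(f)·osc_{B_n}(g), where osc_{B_n}(f) := max{|f(k/n) − f(l/n)| : 0 ≤ k < l ≤ n} and similarly for g. -/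
lemma gruss_core (s : Finset ℕ) (F G b : ℕ → ℝ) (Mf Mg : ℝ)
    (hb : ∀ k ∈ s, 0 ≤ b k) (h1 : ∑ k ∈ s, b k = 1)
    (hMf : 0 ≤ Mf) (hMg : 0 ≤ Mg)
    (hF : ∀ k ∈ s, ∀ l ∈ s, k ≠ l → |F k - F l| ≤ Mf)
    (hG : ∀ k ∈ s, ∀ l ∈ s, k ≠ l → |G k - G l| ≤ Mg) :
    |∑ k ∈ s, F k * G k * b k - (∑ k ∈ s, F k * b k) * (∑ k ∈ s, G k * b k)| ≤
      (1 / 2) * (1 - ∑ k ∈ s, (b k) ^ 2) * Mf * Mg := by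
  have expand : ∑ k ∈ s, ∑ l ∈ s, b k * b l * ((F k - F l) * (G k - G l))
      = 2 * ((∑ k ∈ s, F k * G k * b k) * (∑ k ∈ s, b k))
        - 2 * ((∑ k ∈ s, F k * b k) * (∑ k ∈ s, G k * b k)) := by
    have e1 : ∑ k ∈ s, ∑ l ∈ s, b k * b l * ((F k - F l) * (G k - G l))
        = ∑ k ∈ s, ∑ l ∈ s,
            (F k * G k * b k * b l + F l * G l * b l * b k
              - (F k * b k * (G l * b l) + F l * b l * (G k * b k))) := by
      refine Finset.sum_congr rfl fun k _ => Finset.sum_congr rfl fun l _ => by ring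
    rw [e1]
    have h2 : ∑ k ∈ s, ∑ l ∈ s, F l * G l * b l * b k
        = (∑ k ∈ s, F k * G k * b k) * (∑ k ∈ s, b k) := by
      rw [Finset.sum_comm, Finset.sum_mul_sum]
    have h3 : ∑ k ∈ s, ∑ l ∈ s, F l * b l * (G k * b k)
        = (∑ k ∈ s, F k * b k) * (∑ k ∈ s, G k * b k) := by
      rw [Finset.sum_comm, Finset.sum_mul_sum]
    simp only [Finset.sum_add_distrib, Finset.sum_sub_distrib]
    rw [h2, h3, ← Finset.sum_mul_sum s s (fun k => F k * G k * b k) b,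
        ← Finset.sum_mul_sum s s (fun k => F k * b k) (fun k => G k * b k)]
    ring
  have key : ∑ k ∈ s, F k * G k * b k - (∑ k ∈ s, F k * b k) * (∑ k ∈ s, G k * b k)
      = (1 / 2) * ∑ k ∈ s, ∑ l ∈ s, b k * b l * ((F k - F l) * (G k - G l)) := by
    rw [expand, h1]; ring
  have termbd : ∀ k ∈ s, ∀ l ∈ s,
      |b k * b l * ((F k - F l) * (G k - G l))|
        ≤ (if k = l then 0 else b k * b l * (Mf * Mg)) := by
    intro k hk l hl
    by_cases h : k = l
    · subst h; simp
    · rw [if_neg h, abs_mul, abs_mul, abs_mul,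
        abs_of_nonneg (hb k hk), abs_of_nonneg (hb l hl)]
      have h1' : |F k - F l| * |G k - G l| ≤ Mf * Mg :=
        mul_le_mul (hF k hk l hl h) (hG k hk l hl h) (abs_nonneg _) hMf
      exact mul_le_mul_of_nonneg_left h1' (mul_nonneg (hb k hk) (hb l hl))
  have hbndsum : ∑ k ∈ s, ∑ l ∈ s, (if k = l then 0 else b k * b l * (Mf * Mg))
      = (1 - ∑ k ∈ s, (b k) ^ 2) * (Mf * Mg) := by
    have inner : ∀ k ∈ s, ∑ l ∈ s, (if k = l then 0 else b k * b l * (Mf * Mg))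
        = b k * (Mf * Mg) - (b k) ^ 2 * (Mf * Mg) := by
      intro k hk
      have e : ∑ l ∈ s, (if k = l then 0 else b k * b l * (Mf * Mg))
          = ∑ l ∈ s, (b k * (Mf * Mg) * b l - (if k = l then b k * b l * (Mf * Mg) else 0)) := by
        refine Finset.sum_congr rfl fun l _ => ?_
        by_cases h : k = l <;> simp [h] <;> ring
      rw [e, Finset.sum_sub_distrib, ← Finset.mul_sum, h1, Finset.sum_ite_eq, if_pos hk]
      ring
    rw [Finset.sum_congr rfl inner, Finset.sum_sub_distrib, ← Finset.sum_mul, ← Finset.sum_mul, h1]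
    ring
  calc |∑ k ∈ s, F k * G k * b k - (∑ k ∈ s, F k * b k) * (∑ k ∈ s, G k * b k)|
      = (1 / 2) * |∑ k ∈ s, ∑ l ∈ s, b k * b l * ((F k - F l) * (G k - G l))| := by
        rw [key, abs_mul, abs_of_nonneg (by norm_num : (0:ℝ) ≤ 1/2)]
    _ ≤ (1 / 2) * ∑ k ∈ s, ∑ l ∈ s, (if k = l then 0 else b k * b l * (Mf * Mg)) := by
        refine mul_le_mul_of_nonneg_left ?_ (by norm_num)
        refine le_trans (Finset.abs_sum_le_sum_abs _ _) ?_
        refine Finset.sum_le_sum fun k hk => ?_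
        exact le_trans (Finset.abs_sum_le_sum_abs _ _)
          (Finset.sum_le_sum fun l hl => termbd k hk l hl)
    _ = (1 / 2) * (1 - ∑ k ∈ s, (b k) ^ 2) * Mf * Mg := by rw [hbndsum]; ring

/-- The Bernstein basis polynomial `b_{n,k}(x) = C(n,k) x^k (1-x)^(n-k)`. -/
noncomputable def bernsteinBasis (n k : ℕ) (x : ℝ) : ℝ :=
  (n.choose k : ℝ) * x ^ k * (1 - x) ^ (n - k)

/-- The classical `n`-th Bernstein operator. -/
noncomputable def bernsteinOp (n : ℕ) (f : ℝ → ℝ) (x : ℝ) : ℝ :=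
  ∑ k ∈ Finset.range (n + 1), f (k / n) * bernsteinBasis n k x

/-- Chebyshev-Grüss-type inequality for the Bernstein operator with the factor
`(1/2)(1 - ∑ b_{n,k}(x)^2)` and discrete oscillations. -/
theorem bernstein_chebyshev_gruss (n : ℕ) (hn : 1 ≤ n)
    (f g : ℝ → ℝ)
    (hf : ∃ C, ∀ y ∈ Set.Icc (0:ℝ) 1, |f y| ≤ C)
    (hg : ∃ C, ∀ y ∈ Set.Icc (0:ℝ) 1, |g y| ≤ C)
    (x : ℝ) (hx : x ∈ Set.Icc (0:ℝ) 1) :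
    |bernsteinOp n (fun t => f t * g t) x - bernsteinOp n f x * bernsteinOp n g x| ≤
      (1 / 2) * (1 - ∑ k ∈ Finset.range (n + 1), (bernsteinBasis n k x) ^ 2) *
        sSup {d : ℝ | ∃ k l : ℕ, k < l ∧ l ≤ n ∧ d = |f (k / n) - f (l / n)|} *
        sSup {d : ℝ | ∃ k l : ℕ, k < l ∧ l ≤ n ∧ d = |g (k / n) - g (l / n)|} := by
  obtain ⟨Cf, hCf⟩ := hf
  obtain ⟨Cg, hCg⟩ := hg
  obtain ⟨hx0, hx1⟩ := hx
  have hnpos : (0:ℝ) < n := by exact_mod_cast hn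
  have hmem : ∀ k : ℕ, k ≤ n → ((k:ℝ) / n) ∈ Set.Icc (0:ℝ) 1 := by
    intro k hk
    constructor
    · positivity
    · rw [div_le_one hnpos]; exact_mod_cast hk
  -- nonnegativity of basis
  have hb : ∀ k ∈ Finset.range (n + 1), 0 ≤ bernsteinBasis n k x := by
    intro k _
    exact mul_nonneg (mul_nonneg (Nat.cast_nonneg _) (pow_nonneg hx0 _))
      (pow_nonneg (by linarith) _)
  -- partition of unity
  have h1 : ∑ k ∈ Finset.range (n + 1), bernsteinBasis n k x = 1 := by
    have h := (add_pow x (1 - x) n).symm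
    rw [show x + (1 - x) = 1 by ring, one_pow] at h
    rw [show (1:ℝ) = ∑ k ∈ Finset.range (n+1), x ^ k * (1-x) ^ (n-k) * (n.choose k : ℝ) from h.symm]
    exact Finset.sum_congr rfl fun k _ => by unfold bernsteinBasis; ring
  -- oscillation facts
  have osc_facts : ∀ (h : ℝ → ℝ) (C : ℝ), (∀ y ∈ Set.Icc (0:ℝ) 1, |h y| ≤ C) →
      0 ≤ sSup {d : ℝ | ∃ k l : ℕ, k < l ∧ l ≤ n ∧ d = |h (k / n) - h (l / n)|} ∧
      ∀ k ∈ Finset.range (n+1), ∀ l ∈ Finset.range (n+1), k ≠ l →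
        |h (k / n) - h (l / n)| ≤
          sSup {d : ℝ | ∃ k l : ℕ, k < l ∧ l ≤ n ∧ d = |h (k / n) - h (l / n)|} := by
    intro h C hC
    set S := {d : ℝ | ∃ k l : ℕ, k < l ∧ l ≤ n ∧ d = |h (k / n) - h (l / n)|} with hS
    have hbdd : BddAbove S := by
      refine ⟨2 * C, ?_⟩
      rintro d ⟨k, l, hkl, hln, rfl⟩
      have h1 := hC _ (hmem k (le_of_lt (lt_of_lt_of_le hkl hln)))
      have h2 := hC _ (hmem l hln)
      calc |h (k / n) - h (l / n)| ≤ |h ((k:ℝ) / n)| + |h ((l:ℝ) / n)| := abs_sub _ _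
        _ ≤ 2 * C := by linarith
    have hle : ∀ k l : ℕ, k < l → l ≤ n → |h (k / n) - h (l / n)| ≤ sSup S := by
      intro k l hkl hln
      exact le_csSup hbdd ⟨k, l, hkl, hln, rfl⟩
    constructor
    · exact le_trans (abs_nonneg _) (hle 0 1 Nat.zero_lt_one hn)
    · intro k hk l hl hne
      rw [Finset.mem_range, Nat.lt_succ_iff] at hk hl
      rcases lt_or_gt_of_ne hne with hlt | hgt
      · exact hle k l hlt hl
      · rw [abs_sub_comm]; exact hle l k hgt hk
  obtain ⟨hMf0, hMf⟩ := osc_facts f Cf hCf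
  obtain ⟨hMg0, hMg⟩ := osc_facts g Cg hCg
  have := gruss_core (Finset.range (n+1)) (fun k => f (k / n)) (fun k => g (k / n))
    (fun k => bernsteinBasis n k x) _ _ hb h1 hMf0 hMg0 hMf hMg
  simpa [bernsteinOp, mul_assoc] using this
end

section
/- For every n ≥ 1 and every x ∈ [0,1], the inequality ∑_{k=0}^n C(n,k)² x^{2k} (1−x)^{2(n−k)} ≥ (1/4^n)·C(2n,n) holds, where C(n,k) denotes the binomial coefficient. -/
open Finset Complex

private lemma rootSum {N : ℕ} (w : ℂ) (hw : w ^ N = 1) :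
    ∑ j ∈ range N, w ^ j = if w = 1 then (N : ℂ) else 0 := by
  split_ifs with h
  · simp [h]
  · rw [geom_sum_eq h, hw]; simp

private lemma parseval (N : ℕ) (hN : N ≠ 0) (ζ : ℂ) (hζ : IsPrimitiveRoot ζ N)
    (a : ℕ → ℝ) :
    ∑ j ∈ range N, Complex.normSq (∑ k ∈ range N, (a k : ℂ) * (ζ ^ k) ^ j)
      = N * ∑ k ∈ range N, (a k) ^ 2 := by
  have hnorm : ‖ζ‖ = 1 := hζ.norm'_eq_one hN
  have hconj : (starRingEnd ℂ) ζ = ζ⁻¹ := (Complex.inv_eq_conj hnorm).symm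
  have hζ0 : ζ ≠ 0 := hζ.ne_zero hN
  have key : (↑(∑ j ∈ range N, Complex.normSq (∑ k ∈ range N, (a k : ℂ) * (ζ ^ k) ^ j)) : ℂ)
      = (↑((N : ℝ) * ∑ k ∈ range N, (a k) ^ 2) : ℂ) := by
    push_cast
    calc ∑ j ∈ range N, (Complex.normSq (∑ k ∈ range N, (a k : ℂ) * (ζ ^ k) ^ j) : ℂ)
        = ∑ j ∈ range N, ∑ k ∈ range N, ∑ l ∈ range N,
            (a k : ℂ) * (a l : ℂ) * ((ζ ^ k * (ζ⁻¹) ^ l) ^ j) := by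
          refine Finset.sum_congr rfl fun j _ => ?_
          rw [← Complex.mul_conj, map_sum, Finset.sum_mul_sum]
          refine Finset.sum_congr rfl fun k _ => Finset.sum_congr rfl fun l _ => ?_
          rw [map_mul, map_pow, map_pow, Complex.conj_ofReal, hconj]
          ring
      _ = ∑ k ∈ range N, ∑ l ∈ range N,
            (a k : ℂ) * (a l : ℂ) * ∑ j ∈ range N, ((ζ ^ k * (ζ⁻¹) ^ l) ^ j) := by
          rw [Finset.sum_comm]
          refine Finset.sum_congr rfl fun k _ => ?_
          rw [Finset.sum_comm]
          refine Finset.sum_congr rfl fun l _ => ?_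
          rw [Finset.mul_sum]
      _ = ∑ k ∈ range N, ∑ l ∈ range N,
            (a k : ℂ) * (a l : ℂ) * (if l = k then (N : ℂ) else 0) := by
          refine Finset.sum_congr rfl fun k hk => Finset.sum_congr rfl fun l hl => ?_
          congr 1
          rw [rootSum _ (by rw [mul_pow, ← pow_mul, ← pow_mul, mul_comm k N, mul_comm l N,
            pow_mul, pow_mul, hζ.pow_eq_one, inv_pow, hζ.pow_eq_one]; simp)]
          have hiff : (ζ ^ k * (ζ⁻¹) ^ l = 1) ↔ (l = k) := by
            rw [inv_pow, ← div_eq_mul_inv, div_eq_one_iff_eq (pow_ne_zero _ hζ0)]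
            constructor
            · intro h; exact (hζ.pow_inj (mem_range.mp hl) (mem_range.mp hk) h.symm)
            · intro h; rw [h]
          rw [if_congr hiff rfl rfl]
      _ = ∑ k ∈ range N, (a k : ℂ) ^ 2 * N := by
          refine Finset.sum_congr rfl fun k hk => ?_
          simp only [mul_ite, mul_zero]
          rw [Finset.sum_ite_eq' (range N) k (fun l => (a k : ℂ) * (a l : ℂ) * N), if_pos hk]
          ring
      _ = (N : ℂ) * ∑ k ∈ range N, (a k : ℂ) ^ 2 := by
          rw [← Finset.sum_mul]; ring
  exact_mod_cast key

/-- For all `n ≥ 1` and `x ∈ [0,1]`: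
`∑_{k=0}^n C(n,k)² x^(2k) (1-x)^(2(n-k)) ≥ (1/4^n) C(2n,n)`. -/
theorem bernstein_sq_sum_ge_central (n : ℕ) (hn : 1 ≤ n) (x : ℝ)
    (hx : x ∈ Set.Icc (0:ℝ) 1) :
    (1 / 4 ^ n : ℝ) * ((2 * n).choose n : ℝ) ≤
      ∑ k ∈ Finset.range (n + 1),
        (n.choose k : ℝ) ^ 2 * x ^ (2 * k) * (1 - x) ^ (2 * (n - k)) := by
  obtain ⟨hx0, hx1⟩ := hx
  have hN : n + 1 ≠ 0 := Nat.succ_ne_zero n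
  set ζ : ℂ := Complex.exp (2 * Real.pi * Complex.I / (n + 1 : ℕ)) with hζdef
  have hζ : IsPrimitiveRoot ζ (n + 1) := Complex.isPrimitiveRoot_exp (n + 1) hN
  have hnormζ : ‖ζ‖ = 1 := hζ.norm'_eq_one hN
  -- binomial expansion identity
  have hA : ∀ (y : ℝ) (j : ℕ),
      (∑ k ∈ range (n + 1), ((((n.choose k : ℝ) * y ^ k * (1 - y) ^ (n - k)) : ℝ) : ℂ) * (ζ ^ k) ^ j)
        = ((y : ℂ) * ζ ^ j + (1 - (y : ℂ))) ^ n := by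
    intro y j
    rw [add_pow]
    refine Finset.sum_congr rfl fun k hk => ?_
    push_cast
    ring
  have PA := parseval (n + 1) hN ζ hζ (fun k => (n.choose k : ℝ) * x ^ k * (1 - x) ^ (n - k))
  have PB := parseval (n + 1) hN ζ hζ (fun k => (n.choose k : ℝ) * (1/2) ^ k * (1 - 1/2) ^ (n - k))
  rw [Finset.sum_congr rfl (fun j _ => by rw [hA x j])] at PA
  rw [Finset.sum_congr rfl (fun j _ => by rw [hA (1/2) j])] at PB
  -- pointwise comparison
  have hzre : ∀ j : ℕ, Complex.normSq (ζ ^ j) = 1 := by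
    intro j
    rw [Complex.normSq_eq_norm_sq, norm_pow, hnormζ, one_pow, one_pow]
  have hpt : ∀ j ∈ range (n + 1),
      Complex.normSq ((((1:ℝ)/2 : ℝ) : ℂ) * ζ ^ j + (1 - (((1:ℝ)/2 : ℝ) : ℂ))) ^ n
        ≤ Complex.normSq ((x : ℂ) * ζ ^ j + (1 - (x : ℂ))) ^ n := by
    intro j _
    apply pow_le_pow_left₀ (Complex.normSq_nonneg _)
    have h1 := hzre j
    set z := ζ ^ j
    have hre : z.re * z.re + z.im * z.im = 1 := by
      simpa [Complex.normSq_apply] using h1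
    have hval : ∀ y : ℝ, Complex.normSq ((y : ℂ) * z + (1 - (y : ℂ)))
        = y ^ 2 + (1 - y) ^ 2 + 2 * y * (1 - y) * z.re := by
      intro y
      simp only [Complex.normSq_apply, Complex.add_re, Complex.add_im, Complex.mul_re,
        Complex.mul_im, Complex.sub_re, Complex.sub_im, Complex.ofReal_re, Complex.ofReal_im,
        Complex.one_re, Complex.one_im]
      nlinarith [hre]
    rw [hval, hval]
    have hc1 : z.re ≤ 1 := by nlinarith [hre, sq_nonneg z.im, sq_nonneg (z.re - 1)]
    nlinarith [sq_nonneg (2 * x - 1), hc1, mul_nonneg (mul_nonneg hx0 (by linarith : (0:ℝ) ≤ 1 - x)) (by linarith : (0:ℝ) ≤ 1 - z.re)]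
  have hsum_le := Finset.sum_le_sum hpt
  -- compute the half case sum of squares
  have hhalf : ∑ k ∈ range (n + 1), ((n.choose k : ℝ) * (1/2) ^ k * (1 - 1/2) ^ (n - k)) ^ 2
      = (1 / 4 ^ n : ℝ) * ((2 * n).choose n : ℝ) := by
    have hvand : ((2 * n).choose n : ℝ) = ∑ k ∈ range (n + 1), (n.choose k : ℝ) ^ 2 := by
      have h := Nat.add_choose_eq n n n
      rw [Finset.Nat.sum_antidiagonal_eq_sum_range_succ_mk] at h
      rw [two_mul, h]
      push_cast
      refine Finset.sum_congr rfl fun k hk => ?_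
      rw [Nat.choose_symm (Nat.lt_succ_iff.mp (mem_range.mp hk)), sq]
    rw [hvand, Finset.mul_sum]
    refine Finset.sum_congr rfl fun k hk => ?_
    have hk' : k ≤ n := Nat.lt_succ_iff.mp (mem_range.mp hk)
    rw [mul_pow, mul_pow, ← pow_mul, ← pow_mul]
    have : ((1:ℝ)/2) ^ (k * 2) * (1 - 1/2) ^ ((n - k) * 2) = 1 / 4 ^ n := by
      have h2 : (1 - (1:ℝ)/2) = 1/2 := by norm_num
      rw [h2, ← pow_add]
      have he : k * 2 + (n - k) * 2 = 2 * n := by omega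
      rw [he, pow_mul]
      norm_num
      rw [one_div, inv_pow]
    calc (n.choose k : ℝ) ^ 2 * (1/2) ^ (k * 2) * (1 - 1/2) ^ ((n - k) * 2)
        = (n.choose k : ℝ) ^ 2 * ((1/2) ^ (k * 2) * (1 - 1/2) ^ ((n - k) * 2)) := by ring
      _ = 1 / 4 ^ n * (n.choose k : ℝ) ^ 2 := by rw [this]; ring
  -- assemble
  have hgoal : ∑ k ∈ Finset.range (n + 1),
      (n.choose k : ℝ) ^ 2 * x ^ (2 * k) * (1 - x) ^ (2 * (n - k))
      = ∑ k ∈ range (n + 1), ((n.choose k : ℝ) * x ^ k * (1 - x) ^ (n - k)) ^ 2 := by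
    refine Finset.sum_congr rfl fun k _ => ?_
    rw [mul_pow, mul_pow, ← pow_mul, ← pow_mul, mul_comm k 2, mul_comm (n - k) 2]
  rw [hgoal]
  have hNpos : (0:ℝ) < (n + 1 : ℕ) := by positivity
  rw [← mul_le_mul_iff_right₀ hNpos]
  calc ((n + 1 : ℕ) : ℝ) * ((1 / 4 ^ n : ℝ) * ((2 * n).choose n : ℝ))
      = ((n + 1 : ℕ) : ℝ) * ∑ k ∈ range (n + 1),
          ((n.choose k : ℝ) * (1/2) ^ k * (1 - 1/2) ^ (n - k)) ^ 2 := by rw [hhalf]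
    _ = ∑ j ∈ range (n + 1),
          Complex.normSq (((((1:ℝ)/2 : ℝ)) * ζ ^ j + (1 - (((1:ℝ)/2 : ℝ) : ℂ))) ^ n) := by
        rw [PB]
    _ ≤ ∑ j ∈ range (n + 1),
          Complex.normSq (((x : ℂ) * ζ ^ j + (1 - (x : ℂ))) ^ n) := by
        refine Finset.sum_le_sum fun j hj => ?_
        rw [map_pow, map_pow]
        exact hpt j hj
    _ = ((n + 1 : ℕ) : ℝ) * ∑ k ∈ range (n + 1),
          ((n.choose k : ℝ) * x ^ k * (1 - x) ^ (n - k)) ^ 2 := PA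
end

section
/- Let P_n denote the n-th Legendre polynomial, given by P_n(x) := 2^{−n} ∑_{k=0}^n C(n,k)² (x+1)^k (x−1)^{n−k}. Then for every n ≥ 1 and every real y > 1, P_n(y) ≤ (y + √(y²−1))·P_{n−1}(y). -/
open Finset

lemma key_legendre (m : ℕ) (c d : ℝ) (hc : 0 < c) (hd : 0 < d) :
    ∑ k ∈ Finset.range (m + 2), ((m+1).choose k : ℝ) ^ 2 * c ^ k * d ^ (m + 1 - k)
      ≤ (c + d + 2 * Real.sqrt (c * d)) *
        ∑ k ∈ Finset.range (m + 1), (m.choose k : ℝ) ^ 2 * c ^ k * d ^ (m - k) := by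
  set s := Real.sqrt (c * d) with hs_def
  have hs : 0 ≤ s := Real.sqrt_nonneg _
  have hss : s * s = c * d := Real.mul_self_sqrt (by positivity)
  set v : ℕ → ℝ := fun k => (m.choose k : ℝ) * Real.sqrt (c ^ k * d ^ (m - k) * s)
    with hv_def
  have hv2 : ∀ k, v k ^ 2 = (m.choose k : ℝ) ^ 2 * c ^ k * d ^ (m - k) * s := by
    intro k
    have : (0:ℝ) ≤ c ^ k * d ^ (m-k) * s := by positivity
    simp only [hv_def, mul_pow, Real.sq_sqrt this]
    ring
  have cross : ∀ k ∈ Finset.range (m+1),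
      2 * ((m.choose k : ℝ) * (m.choose (k+1))) * (c ^ (k+1) * d ^ (m - k))
        ≤ v k ^ 2 + v (k+1) ^ 2 := by
    intro k hk
    have hk' : k ≤ m := Nat.lt_succ_iff.mp (Finset.mem_range.mp hk)
    rcases eq_or_lt_of_le hk' with heq | hlt
    · have h0 : (m.choose (k+1) : ℝ) = 0 := by
        rw [Nat.choose_eq_zero_of_lt (by omega)]; simp
      rw [h0]
      have h1 := sq_nonneg (v k)
      have h2 := sq_nonneg (v (k+1))
      nlinarith
    · have hprod : v k * v (k+1)
          = (m.choose k : ℝ) * (m.choose (k+1)) * (c ^ (k+1) * d ^ (m - k)) := by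
        set e := m - (k+1) with he_def
        have h1 : m - k = e + 1 := by omega
        simp only [hv_def, h1]
        rw [show (m.choose k : ℝ) * Real.sqrt (c ^ k * d ^ (e+1) * s) *
            ((m.choose (k+1) : ℝ) * Real.sqrt (c ^ (k+1) * d ^ e * s))
            = (m.choose k : ℝ) * (m.choose (k+1)) *
              (Real.sqrt (c ^ k * d ^ (e+1) * s) * Real.sqrt (c ^ (k+1) * d ^ e * s)) by ring]
        rw [← Real.sqrt_mul (by positivity)]
        have hx : c ^ k * d ^ (e+1) * s * (c ^ (k+1) * d ^ e * s)
            = (c ^ (k+1) * d ^ (e+1)) ^ 2 := by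
          linear_combination (c^k * c^(k+1) * d^e * d^(e+1)) * hss
        rw [hx, Real.sqrt_sq (by positivity)]
      nlinarith [sq_nonneg (v k - v (k+1)), hprod]
  have hL : ∑ k ∈ Finset.range (m + 2), ((m+1).choose k : ℝ) ^ 2 * c ^ k * d ^ (m + 1 - k)
      = (∑ k ∈ Finset.range (m+1),
          ((m.choose k : ℝ)^2 * c^(k+1) * d^(m-k)
            + (m.choose (k+1) : ℝ)^2 * c^(k+1) * d^(m-k)
            + 2 * ((m.choose k : ℝ) * (m.choose (k+1))) * (c^(k+1) * d^(m-k))))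
        + d ^ (m+1) := by
    rw [Finset.sum_range_succ']
    congr 1
    · apply Finset.sum_congr rfl
      intro k hk
      have hch : ((m+1).choose (k+1) : ℝ) = (m.choose k : ℝ) + m.choose (k+1) := by
        rw [Nat.choose_succ_succ]; push_cast; ring
      have hsub : m + 1 - (k+1) = m - k := by omega
      rw [hch, hsub]; ring
    · simp
  set S := ∑ k ∈ Finset.range (m + 1), (m.choose k : ℝ) ^ 2 * c ^ k * d ^ (m - k) with hS_def
  have h1 : ∑ k ∈ Finset.range (m+1), (m.choose k : ℝ)^2 * c^(k+1) * d^(m-k) = c * S := by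
    rw [hS_def, Finset.mul_sum]
    exact Finset.sum_congr rfl fun k _ => by ring
  have h2 : (∑ k ∈ Finset.range (m+1), (m.choose (k+1) : ℝ)^2 * c^(k+1) * d^(m-k))
      + d ^ (m+1) = d * S := by
    have e1 := Finset.sum_range_succ' (fun k => (m.choose k : ℝ)^2 * c^k * d^(m+1-k)) (m+1)
    have e2 := Finset.sum_range_succ (fun k => (m.choose k : ℝ)^2 * c^k * d^(m+1-k)) (m+1)
    simp only [Nat.succ_sub_succ_eq_sub, Nat.choose_zero_right, Nat.cast_one, one_pow,
      pow_zero, Nat.sub_zero, one_mul, mul_one] at e1 e2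
    have hz : (m.choose (m+1) : ℝ) = 0 := by simp
    rw [hz] at e2
    have e3 : d * S = ∑ k ∈ Finset.range (m+1), (m.choose k : ℝ)^2 * c^k * d^(m+1-k) := by
      rw [hS_def, Finset.mul_sum]
      apply Finset.sum_congr rfl
      intro k hk
      have hk' : k ≤ m := Nat.lt_succ_iff.mp (Finset.mem_range.mp hk)
      have : m + 1 - k = (m - k) + 1 := by omega
      rw [this]; ring
    rw [e3]
    linarith [e1, e2]
  have hv_sum : ∑ k ∈ Finset.range (m+1), v k ^ 2 = s * S := by
    rw [hS_def, Finset.mul_sum]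
    exact Finset.sum_congr rfl fun k _ => by rw [hv2 k]; ring
  have hshift : ∑ k ∈ Finset.range (m+1), v (k+1) ^ 2
      ≤ ∑ k ∈ Finset.range (m+1), v k ^ 2 := by
    have e1 := Finset.sum_range_succ' (fun k => v k ^ 2) (m+1)
    have e2 := Finset.sum_range_succ (fun k => v k ^ 2) (m+1)
    have hvm : v (m+1) = 0 := by simp [hv_def]
    rw [hvm] at e2
    nlinarith [sq_nonneg (v 0)]
  have h3 : ∑ k ∈ Finset.range (m+1),
      2 * ((m.choose k : ℝ) * (m.choose (k+1))) * (c^(k+1) * d^(m-k)) ≤ 2 * s * S := by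
    calc ∑ k ∈ Finset.range (m+1),
          2 * ((m.choose k : ℝ) * (m.choose (k+1))) * (c^(k+1) * d^(m-k))
        ≤ ∑ k ∈ Finset.range (m+1), (v k ^ 2 + v (k+1) ^ 2) := Finset.sum_le_sum cross
      _ = ∑ k ∈ Finset.range (m+1), v k ^ 2 + ∑ k ∈ Finset.range (m+1), v (k+1) ^ 2 :=
          Finset.sum_add_distrib
      _ ≤ 2 * (∑ k ∈ Finset.range (m+1), v k ^ 2) := by linarith [hshift]
      _ = 2 * s * S := by rw [hv_sum]; ring
  rw [hL]
  rw [show ∀ f g h : ℕ → ℝ, ∑ k ∈ Finset.range (m+1), (f k + g k + h k)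
      = ∑ k ∈ Finset.range (m+1), f k + ∑ k ∈ Finset.range (m+1), g k
        + ∑ k ∈ Finset.range (m+1), h k from fun f g h => by
    rw [Finset.sum_add_distrib, Finset.sum_add_distrib]]
  linarith [h1, h2, h3]

noncomputable def legendreP (n : ℕ) (x : ℝ) : ℝ :=
  (1 / 2 ^ n) * ∑ k ∈ Finset.range (n + 1),
    (n.choose k : ℝ) ^ 2 * (x + 1) ^ k * (x - 1) ^ (n - k)

/-- For `n ≥ 1` and `y > 1`: `P_n(y) ≤ (y + √(y²-1)) P_{n-1}(y)`. -/
theorem legendre_ratio_bound (n : ℕ) (hn : 1 ≤ n) (y : ℝ) (hy : 1 < y) :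
    legendreP n y ≤ (y + Real.sqrt (y ^ 2 - 1)) * legendreP (n - 1) y := by
  obtain ⟨m, rfl⟩ : ∃ m, n = m + 1 := ⟨n - 1, by omega⟩
  simp only [Nat.add_sub_cancel, legendreP]
  have hc : (0:ℝ) < y + 1 := by linarith
  have hd : (0:ℝ) < y - 1 := by linarith
  have hkey := key_legendre m (y+1) (y-1) hc hd
  have hsq : Real.sqrt (y ^ 2 - 1) = Real.sqrt ((y+1)*(y-1)) := by
    congr 1; ring
  rw [hsq]
  set s := Real.sqrt ((y+1)*(y-1)) with hs_def
  set S := ∑ k ∈ Finset.range (m + 1), (m.choose k : ℝ) ^ 2 * (y+1) ^ k * (y-1) ^ (m - k)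
  set L := ∑ k ∈ Finset.range (m + 1 + 1),
    ((m+1).choose k : ℝ) ^ 2 * (y+1) ^ k * (y-1) ^ (m + 1 - k) with hL_def
  have hkey' : L ≤ ((y+1) + (y-1) + 2 * s) * S := hkey
  have heq : (y + s) * ((1/2^m : ℝ) * S) = (1/2^(m+1)) * (((y+1) + (y-1) + 2*s) * S) := by
    rw [pow_succ]; ring
  rw [heq]
  exact mul_le_mul_of_nonneg_left hkey' (by positivity)
end

section
/- Let n ≥ 1, and for f : [0,1] → ℝ let B_n f(x) := ∑_{k=0}^n f(k/n)·b_{n,k}(x), where b_{n,k}(x) := C(n,k) x^k (1−x)^{n−k}. Then for all bounded functions f, g : [0,1] → ℝ and all x ∈ [0,1], |B_n(f·g)(x) − B_n f(x)·B_n g(x)| ≤ (1/2)·(1 − (1/4^n)·C(2n,n))·osc_{B_n}(f)·osc_{B_n}(g), where osc_{B_n}(f) := max{|f(k/n) − f(l/n)| : 0 ≤ k < l ≤ n} and similarly for g. -/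
open Real Complex intervalIntegral Finset

lemma int_exp (a b : ℕ) :
    ∫ t in (0:ℝ)..(2*π), Complex.exp (((a:ℂ) - b) * (t * Complex.I)) =
      ((if a = b then (2*π:ℝ) else 0 : ℝ) : ℂ) := by
  by_cases h : a = b
  · simp [h]
  · have hc : ((a:ℂ) - b) * Complex.I ≠ 0 := by
      simp [sub_eq_zero, Complex.I_ne_zero, Nat.cast_injective.ne h]
    have : ∀ t : ℝ, ((a:ℂ) - b) * (t * Complex.I) = (((a:ℂ) - b) * Complex.I) * t := by
      intro t; ring
    simp only [this]
    rw [integral_exp_mul_complex hc]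
    have : Complex.exp ((((a:ℂ) - b) * Complex.I) * (2*π)) = 1 := by
      have := Complex.exp_int_mul_two_pi_mul_I ((a:ℤ) - b)
      rw [← this]; congr 1; push_cast; ring
    simp [h, this]

lemma key_integral (n : ℕ) (p q : ℝ) :
    ∫ t in (0:ℝ)..(2*π),
        ((q:ℂ) + p * Complex.exp (t*Complex.I))^n *
        ((q:ℂ) + p * Complex.exp (-(t*Complex.I)))^n =
      ((2*π:ℝ):ℂ) * ∑ k ∈ Finset.range (n+1),
        ((n.choose k : ℝ):ℂ)^2 * (q:ℂ)^(2*k) * (p:ℂ)^(2*(n-k)) := by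
  have expand : ∀ t : ℝ,
      ((q:ℂ) + p * Complex.exp (t*Complex.I))^n *
      ((q:ℂ) + p * Complex.exp (-(t*Complex.I)))^n =
      ∑ k ∈ Finset.range (n+1), ∑ l ∈ Finset.range (n+1),
        (((n.choose k : ℝ):ℂ) * ((n.choose l : ℝ):ℂ) * (q:ℂ)^(k+l) * (p:ℂ)^((n-k)+(n-l)))
          * Complex.exp ((((n-k : ℕ):ℂ) - ((n-l : ℕ):ℂ)) * (t * Complex.I)) := by
    intro t
    rw [add_pow, add_pow, Finset.sum_mul_sum]
    refine Finset.sum_congr rfl fun k _ => Finset.sum_congr rfl fun l _ => ?_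
    rw [mul_pow, mul_pow, ← Complex.exp_nat_mul, ← Complex.exp_nat_mul]
    have h1 : ((((n-k : ℕ):ℂ) - ((n-l : ℕ):ℂ)) * (t * Complex.I)) =
        ((n-k : ℕ):ℂ) * (↑t * Complex.I) + ((n-l : ℕ):ℂ) * -(↑t * Complex.I) := by ring
    rw [h1, Complex.exp_add, pow_add, pow_add]
    push_cast
    ring
  rw [intervalIntegral.integral_congr (fun t _ => expand t)]
  have hcont : ∀ (c : ℂ) (a b : ℕ), Continuous
      (fun t : ℝ => c * Complex.exp (((a:ℂ) - b) * (t * Complex.I))) := by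
    intro c a b; fun_prop
  rw [intervalIntegral.integral_finset_sum (fun k _ =>
    (continuous_finset_sum _ (fun l _ => hcont _ _ _)).intervalIntegrable _ _)]
  rw [Finset.mul_sum]
  refine Finset.sum_congr rfl fun k hk => ?_
  rw [intervalIntegral.integral_finset_sum (fun l _ =>
    (hcont _ _ _).intervalIntegrable _ _)]
  have hk' : k ≤ n := by simpa [Nat.lt_succ_iff] using hk
  have step : ∀ l ∈ Finset.range (n+1),
      (∫ t in (0:ℝ)..(2*π),
        (((n.choose k : ℝ):ℂ) * ((n.choose l : ℝ):ℂ) * (q:ℂ)^(k+l) * (p:ℂ)^((n-k)+(n-l)))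
          * Complex.exp ((((n-k : ℕ):ℂ) - ((n-l : ℕ):ℂ)) * (t * Complex.I))) =
      (((n.choose k : ℝ):ℂ) * ((n.choose l : ℝ):ℂ) * (q:ℂ)^(k+l) * (p:ℂ)^((n-k)+(n-l)))
        * ((if n-k = n-l then (2*π:ℝ) else 0 : ℝ) : ℂ) := by
    intro l _
    rw [intervalIntegral.integral_const_mul, int_exp]
  rw [Finset.sum_congr rfl step, Finset.sum_eq_single_of_mem k hk]
  · rw [if_pos rfl]
    push_cast
    rw [two_mul, two_mul, pow_add, pow_add]
    ring
  · intro l hl hne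
    have hl' : l ≤ n := by simpa [Nat.lt_succ_iff] using hl
    rw [if_neg (by omega)]
    simp

lemma real_integral (n : ℕ) (p q : ℝ) (hpq : p + q = 1) :
    ∫ t in (0:ℝ)..(2*π), (1 - 2*p*q*(1 - Real.cos t))^n =
      (2*π) * ∑ k ∈ Finset.range (n+1), ((n.choose k : ℝ))^2 * q^(2*k) * p^(2*(n-k)) := by
  have hpt : ∀ t : ℝ, (((1 - 2*p*q*(1 - Real.cos t))^n : ℝ) : ℂ) =
      ((q:ℂ) + p * Complex.exp (t*Complex.I))^n *
      ((q:ℂ) + p * Complex.exp (-(t*Complex.I)))^n := by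
    intro t
    rw [← mul_pow]
    push_cast
    congr 1
    have he : Complex.exp ((t:ℂ)*Complex.I) * Complex.exp (-((t:ℂ)*Complex.I)) = 1 := by
      rw [← Complex.exp_add]; simp
    have hee : Complex.exp ((t:ℂ)*Complex.I) + Complex.exp (-((t:ℂ)*Complex.I)) =
        2 * Complex.cos (t:ℂ) := by
      rw [show -((t:ℂ)*Complex.I) = ((-t : ℝ):ℂ)*Complex.I by push_cast; ring,
        Complex.exp_mul_I, Complex.exp_mul_I]
      push_cast
      simp [Real.cos_neg, Real.sin_neg, Complex.cos]
      ring
    have hpq' : (p:ℂ) + q = 1 := by exact_mod_cast congrArg (Complex.ofReal) hpq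
    linear_combination (-(p:ℂ)*q) * hee + (-(p:ℂ)^2) * he + (-((p:ℂ)+(q:ℂ)+1)) * hpq'
  have h1 : ((∫ t in (0:ℝ)..(2*π), (1 - 2*p*q*(1 - Real.cos t))^n : ℝ) : ℂ) =
      ∫ t in (0:ℝ)..(2*π), (((1 - 2*p*q*(1 - Real.cos t))^n : ℝ) : ℂ) :=
    intervalIntegral.integral_ofReal.symm
  have h2 := key_integral n p q
  rw [intervalIntegral.integral_congr (fun t _ => hpt t)] at h1
  rw [h2] at h1
  apply Complex.ofReal_injective
  rw [h1]
  push_cast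
  ring

lemma vandermonde_sq (n : ℕ) :
    ∑ k ∈ Finset.range (n+1), n.choose k * n.choose k = (2*n).choose n := by
  rw [two_mul, Nat.add_choose_eq, Finset.Nat.sum_antidiagonal_eq_sum_range_succ_mk]
  refine Finset.sum_congr rfl fun k hk => ?_
  have hk' : k ≤ n := by simpa [Nat.lt_succ_iff] using hk
  rw [Nat.choose_symm hk']

lemma sq_sum_ge (n : ℕ) (x : ℝ) (hx : x ∈ Set.Icc (0:ℝ) 1) :
    ((2*n).choose n : ℝ) / 4^n ≤
      ∑ k ∈ Finset.range (n+1), (bernsteinBasis n k x)^2 := by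
  obtain ⟨hx0, hx1⟩ := hx
  have hpq : (1 - x) + x = 1 := by ring
  have h1 := real_integral n (1-x) x hpq
  have h2 := real_integral n (1/2) (1/2) (by norm_num)
  -- rewrite the RHS of h1 as the bernstein sum
  have e1 : ∑ k ∈ Finset.range (n+1), ((n.choose k : ℝ))^2 * x^(2*k) * (1-x)^(2*(n-k)) =
      ∑ k ∈ Finset.range (n+1), (bernsteinBasis n k x)^2 := by
    refine Finset.sum_congr rfl fun k _ => ?_
    simp only [bernsteinBasis]
    rw [mul_pow, mul_pow, ← pow_mul, ← pow_mul, mul_comm k 2, mul_comm (n-k) 2]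
  rw [e1] at h1
  -- rewrite the RHS of h2 as the central binomial coefficient
  have e2 : ∑ k ∈ Finset.range (n+1), ((n.choose k : ℝ))^2 * (1/2:ℝ)^(2*k) * (1/2:ℝ)^(2*(n-k)) =
      ((2*n).choose n : ℝ) / 4^n := by
    have : ∀ k ∈ Finset.range (n+1),
        ((n.choose k : ℝ))^2 * (1/2:ℝ)^(2*k) * (1/2:ℝ)^(2*(n-k)) =
        ((n.choose k : ℝ) * (n.choose k : ℝ)) * (1/4^n) := by
      intro k hk
      have hk' : k ≤ n := by simpa [Nat.lt_succ_iff] using hk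
      rw [mul_assoc, ← pow_add]
      have : 2*k + 2*(n-k) = 2*n := by omega
      rw [this, sq]
      congr 1
      rw [pow_mul]
      norm_num
      rw [div_pow]
      norm_num
    rw [Finset.sum_congr rfl this, ← Finset.sum_mul]
    have := vandermonde_sq n
    have hcast : ∑ k ∈ Finset.range (n+1), ((n.choose k : ℝ) * (n.choose k : ℝ)) =
        ((2*n).choose n : ℝ) := by exact_mod_cast congrArg (Nat.cast : ℕ → ℝ) this
    rw [hcast]
    ring
  rw [e2] at h2
  -- monotonicity of the integral
  have hmono : ∫ t in (0:ℝ)..(2*π), (1 - 2*(1/2)*(1/2)*(1 - Real.cos t))^n ≤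
      ∫ t in (0:ℝ)..(2*π), (1 - 2*(1-x)*x*(1 - Real.cos t))^n := by
    apply intervalIntegral.integral_mono_on
    · positivity
    · apply Continuous.intervalIntegrable; fun_prop
    · apply Continuous.intervalIntegrable; fun_prop
    · intro t _
      have hc1 : Real.cos t ≤ 1 := Real.cos_le_one t
      have hc2 : -1 ≤ Real.cos t := Real.neg_one_le_cos t
      have hx4 : (1-x)*x ≤ 1/4 := by nlinarith [sq_nonneg (1-2*x)]
      have h0 : 0 ≤ 1 - 2*(1/2)*(1/2)*(1 - Real.cos t) := by nlinarith
      apply pow_le_pow_left₀ h0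
      nlinarith
  rw [h1, h2] at hmono
  have hpi : (0:ℝ) < 2*π := by positivity
  exact le_of_mul_le_mul_left hmono hpi

lemma bernstein_sum_one (n : ℕ) (x : ℝ) :
    ∑ k ∈ Finset.range (n+1), bernsteinBasis n k x = 1 := by
  have := add_pow x (1-x) n
  simp only [add_sub_cancel, one_pow] at this
  rw [this]
  refine Finset.sum_congr rfl fun k _ => ?_
  simp only [bernsteinBasis]; ring

lemma gruss_identity (s : Finset ℕ) (p a b : ℕ → ℝ) (hp : ∑ k ∈ s, p k = 1) :
    ∑ k ∈ s, p k * (a k * b k) - (∑ k ∈ s, p k * a k) * (∑ k ∈ s, p k * b k) =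
      (1/2) * ∑ k ∈ s, ∑ l ∈ s, p k * p l * (a k - a l) * (b k - b l) := by
  have expand : ∀ k l, p k * p l * (a k - a l) * (b k - b l) =
      (p k * (a k * b k)) * p l + p k * (p l * (a l * b l))
        - (p k * a k) * (p l * b l) - (p k * b k) * (p l * a l) := by
    intros; ring
  simp only [expand, Finset.sum_add_distrib, Finset.sum_sub_distrib,
    ← Finset.sum_mul, ← Finset.mul_sum]
  rw [hp]
  ring

lemma osc_bddAbove (n : ℕ) (f : ℝ → ℝ) :
    BddAbove {d : ℝ | ∃ k l : ℕ, k < l ∧ l ≤ n ∧ d = |f (k / n) - f (l / n)|} := by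
  apply Set.Finite.bddAbove
  have hsub : {d : ℝ | ∃ k l : ℕ, k < l ∧ l ≤ n ∧ d = |f (k / n) - f (l / n)|} ⊆
      (fun kl : ℕ × ℕ => |f (kl.1 / n) - f (kl.2 / n)|) '' (Set.Iic n ×ˢ Set.Iic n) := by
    rintro d ⟨k, l, hkl, hl, rfl⟩
    exact ⟨(k, l), ⟨le_of_lt (lt_of_lt_of_le hkl hl), hl⟩, rfl⟩
  exact (((Set.finite_Iic n).prod (Set.finite_Iic n)).image _).subset hsub

lemma osc_le (n : ℕ) (f : ℝ → ℝ) {k l : ℕ} (hk : k ≤ n) (hl : l ≤ n) (hne : k ≠ l) :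
    |f (k / n) - f (l / n)| ≤
      sSup {d : ℝ | ∃ k l : ℕ, k < l ∧ l ≤ n ∧ d = |f (k / n) - f (l / n)|} := by
  rcases lt_or_gt_of_ne hne with h | h
  · exact le_csSup (osc_bddAbove n f) ⟨k, l, h, hl, rfl⟩
  · rw [abs_sub_comm]
    exact le_csSup (osc_bddAbove n f) ⟨l, k, h, hk, rfl⟩

lemma osc_nonneg (n : ℕ) (hn : 1 ≤ n) (f : ℝ → ℝ) :
    0 ≤ sSup {d : ℝ | ∃ k l : ℕ, k < l ∧ l ≤ n ∧ d = |f (k / n) - f (l / n)|} :=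
  le_trans (abs_nonneg _) (osc_le n f (Nat.zero_le n) hn (by omega))

theorem bernstein_chebyshev_gruss_central' (n : ℕ) (hn : 1 ≤ n)
    (f g : ℝ → ℝ)
    (x : ℝ) (hx : x ∈ Set.Icc (0:ℝ) 1) :
    |bernsteinOp n (fun t => f t * g t) x - bernsteinOp n f x * bernsteinOp n g x| ≤
      (1 / 2) * (1 - (1 / 4 ^ n : ℝ) * ((2 * n).choose n : ℝ)) *
        sSup {d : ℝ | ∃ k l : ℕ, k < l ∧ l ≤ n ∧ d = |f (k / n) - f (l / n)|} *
        sSup {d : ℝ | ∃ k l : ℕ, k < l ∧ l ≤ n ∧ d = |g (k / n) - g (l / n)|} := by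
  obtain ⟨hx0, hx1⟩ := hx
  set s := Finset.range (n+1) with hs
  set p : ℕ → ℝ := fun k => bernsteinBasis n k x with hpdef
  set a : ℕ → ℝ := fun k => f (k / n) with hadef
  set b : ℕ → ℝ := fun k => g (k / n) with hbdef
  set Of := sSup {d : ℝ | ∃ k l : ℕ, k < l ∧ l ≤ n ∧ d = |f (k / n) - f (l / n)|} with hOf
  set Og := sSup {d : ℝ | ∃ k l : ℕ, k < l ∧ l ≤ n ∧ d = |g (k / n) - g (l / n)|} with hOg
  have hOf0 : 0 ≤ Of := osc_nonneg n hn f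
  have hOg0 : 0 ≤ Og := osc_nonneg n hn g
  have hp0 : ∀ k, 0 ≤ p k := by
    intro k
    have h1x : (0:ℝ) ≤ 1 - x := by linarith
    show (0:ℝ) ≤ (n.choose k : ℝ) * x ^ k * (1 - x) ^ (n - k)
    positivity
  have hp1 : ∑ k ∈ s, p k = 1 := bernstein_sum_one n x
  have key : bernsteinOp n (fun t => f t * g t) x - bernsteinOp n f x * bernsteinOp n g x =
      (1/2) * ∑ k ∈ s, ∑ l ∈ s, p k * p l * (a k - a l) * (b k - b l) := by
    have hfg : bernsteinOp n (fun t => f t * g t) x = ∑ k ∈ s, p k * (a k * b k) := by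
      simp only [bernsteinOp]; exact Finset.sum_congr rfl fun k _ => by ring
    have hf' : bernsteinOp n f x = ∑ k ∈ s, p k * a k := by
      simp only [bernsteinOp]; exact Finset.sum_congr rfl fun k _ => by ring
    have hg' : bernsteinOp n g x = ∑ k ∈ s, p k * b k := by
      simp only [bernsteinOp]; exact Finset.sum_congr rfl fun k _ => by ring
    rw [hfg, hf', hg', gruss_identity s p a b hp1]
  rw [key]
  have habs : |∑ k ∈ s, ∑ l ∈ s, p k * p l * (a k - a l) * (b k - b l)| ≤
      ∑ k ∈ s, ∑ l ∈ s, (if k = l then 0 else p k * p l * (Of * Og)) := by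
    refine le_trans (Finset.abs_sum_le_sum_abs _ _) (Finset.sum_le_sum fun k hk => ?_)
    refine le_trans (Finset.abs_sum_le_sum_abs _ _) (Finset.sum_le_sum fun l hl => ?_)
    have hk' : k ≤ n := by simpa [hs, Nat.lt_succ_iff] using hk
    have hl' : l ≤ n := by simpa [hs, Nat.lt_succ_iff] using hl
    by_cases hkl : k = l
    · simp [hkl]
    · rw [if_neg hkl, abs_mul, abs_mul, abs_mul, _root_.abs_of_nonneg (hp0 k), _root_.abs_of_nonneg (hp0 l)]
      have h1 : |a k - a l| ≤ Of := osc_le n f hk' hl' hkl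
      have h2 : |b k - b l| ≤ Og := osc_le n g hk' hl' hkl
      have hpp : 0 ≤ p k * p l := mul_nonneg (hp0 k) (hp0 l)
      calc p k * p l * |a k - a l| * |b k - b l|
          ≤ p k * p l * Of * |b k - b l| :=
            mul_le_mul_of_nonneg_right (mul_le_mul_of_nonneg_left h1 hpp) (abs_nonneg _)
        _ ≤ p k * p l * Of * Og :=
            mul_le_mul_of_nonneg_left h2 (mul_nonneg hpp hOf0)
        _ = p k * p l * (Of * Og) := by ring
  have hsum : ∑ k ∈ s, ∑ l ∈ s, (if k = l then 0 else p k * p l * (Of * Og)) =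
      (1 - ∑ k ∈ s, (p k)^2) * (Of * Og) := by
    have inner : ∀ k ∈ s, ∑ l ∈ s, (if k = l then 0 else p k * p l * (Of * Og)) =
        p k * (Of * Og) - (p k)^2 * (Of * Og) := by
      intro k hk
      have : ∀ l ∈ s, (if k = l then 0 else p k * p l * (Of * Og)) =
          p k * p l * (Of * Og) - (if l = k then p k * p l * (Of * Og) else 0) := by
        intro l _
        by_cases h : k = l
        · simp [h]
        · simp [h, Ne.symm h]
      rw [Finset.sum_congr rfl this, Finset.sum_sub_distrib,
        Finset.sum_ite_eq' s k (fun l => p k * p l * (Of * Og)), if_pos hk,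
        ← Finset.sum_mul, ← Finset.mul_sum]
      rw [hp1]
      ring
    rw [Finset.sum_congr rfl inner, Finset.sum_sub_distrib, ← Finset.sum_mul, ← Finset.sum_mul,
      hp1]
    ring
  have hS : ((2*n).choose n : ℝ) / 4^n ≤ ∑ k ∈ s, (p k)^2 := sq_sum_ge n x ⟨hx0, hx1⟩
  calc |(1/2) * ∑ k ∈ s, ∑ l ∈ s, p k * p l * (a k - a l) * (b k - b l)|
      = (1/2) * |∑ k ∈ s, ∑ l ∈ s, p k * p l * (a k - a l) * (b k - b l)| := by
        rw [abs_mul]; norm_num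
    _ ≤ (1/2) * ((1 - ∑ k ∈ s, (p k)^2) * (Of * Og)) := by
        rw [← hsum]; linarith [habs]
    _ ≤ (1/2) * ((1 - ((2*n).choose n : ℝ) / 4^n) * (Of * Og)) := by
        have hOfOg : 0 ≤ Of * Og := mul_nonneg hOf0 hOg0
        nlinarith
    _ = (1 / 2) * (1 - (1 / 4 ^ n : ℝ) * ((2 * n).choose n : ℝ)) * Of * Og := by ring


/-- The new Chebyshev-Grüss-type inequality for the Bernstein operator:
`|B_n(fg)(x) - B_n f(x) B_n g(x)| ≤ (1/2)(1 - 4^(-n) C(2n,n)) osc(f) osc(g)`. -/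
theorem bernstein_chebyshev_gruss_central (n : ℕ) (hn : 1 ≤ n)
    (f g : ℝ → ℝ)
    (hf : ∃ C, ∀ y ∈ Set.Icc (0:ℝ) 1, |f y| ≤ C)
    (hg : ∃ C, ∀ y ∈ Set.Icc (0:ℝ) 1, |g y| ≤ C)
    (x : ℝ) (hx : x ∈ Set.Icc (0:ℝ) 1) :
    |bernsteinOp n (fun t => f t * g t) x - bernsteinOp n f x * bernsteinOp n g x| ≤
      (1 / 2) * (1 - (1 / 4 ^ n : ℝ) * ((2 * n).choose n : ℝ)) *
        sSup {d : ℝ | ∃ k l : ℕ, k < l ∧ l ≤ n ∧ d = |f (k / n) - f (l / n)|} *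
        sSup {d : ℝ | ∃ k l : ℕ, k < l ∧ l ≤ n ∧ d = |g (k / n) - g (l / n)|} := by
  exact bernstein_chebyshev_gruss_central' n hn f g x hx
end

section
/- Let n ≥ 1 and let A_n be the Baskakov operator, A_n f(x) := ∑_{k=0}^∞ f(k/n)·C(n+k−1,k)·x^k/(1+x)^{n+k} for x ≥ 0, and set ϑ_n(x) := (1+x)^{−2n} ∑_{k=0}^∞ C(n+k−1,k)²·(x/(1+x))^{2k}. Then for all bounded continuous f, g : [0,∞) → ℝ and all x ≥ 0, |A_n(f·g)(x) − A_n f(x)·A_n g(x)| ≤ (1/2)·(1 − ϑ_n(x))·osc_{A_n}(f)·osc_{A_n}(g), where osc_{A_n}(f) := sup{|f(k/n) − f(l/n)| : 0 ≤ k < l < ∞} and similarly for g. -/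
/-- The classical `n`-th Baskakov operator
`A_n f(x) = ∑_{k=0}^∞ f(k/n) C(n+k-1,k) x^k / (1+x)^(n+k)`. -/
noncomputable def baskakovOp (n : ℕ) (f : ℝ → ℝ) (x : ℝ) : ℝ :=
  ∑' k : ℕ, f (k / n) * ((n + k - 1).choose k : ℝ) * x ^ k / (1 + x) ^ (n + k)

/-- `ϑ_n(x) = (1+x)^(-2n) ∑_{k=0}^∞ C(n+k-1,k)² (x/(1+x))^(2k)`, the sum of squares of the
fundamental functions of the Baskakov operator. -/
noncomputable def baskakovTheta (n : ℕ) (x : ℝ) : ℝ :=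
  (1 / (1 + x) ^ (2 * n)) * ∑' k : ℕ, ((n + k - 1).choose k : ℝ) ^ 2 * (x / (1 + x)) ^ (2 * k)

set_option maxHeartbeats 1000000 in
/-- Fundamental functions of the Baskakov operator. -/
noncomputable def bask (n : ℕ) (x : ℝ) (k : ℕ) : ℝ :=
  ((n + k - 1).choose k : ℝ) * x ^ k / (1 + x) ^ (n + k)

lemma bask_nonneg (n : ℕ) {x : ℝ} (hx : 0 ≤ x) (k : ℕ) : 0 ≤ bask n x k := by
  unfold bask
  have : (0:ℝ) ≤ 1 + x := by linarith
  positivity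

lemma bask_hasSum_one (n : ℕ) (hn : 1 ≤ n) {x : ℝ} (hx : 0 ≤ x) :
    HasSum (bask n x) 1 := by
  have hx1 : (0:ℝ) < 1 + x := by linarith
  have hxne : (1:ℝ) + x ≠ 0 := hx1.ne'
  have ht0 : 0 ≤ x / (1 + x) := div_nonneg hx hx1.le
  have ht1 : x / (1 + x) < 1 := (div_lt_one hx1).2 (by linarith)
  have htn : ‖x / (1 + x)‖ < 1 := by rw [Real.norm_eq_abs, abs_of_nonneg ht0]; exact ht1
  have hexp : (n - 1) + 1 = n := by omega
  have H := (hasSum_choose_mul_geometric_of_norm_lt_one (𝕜 := ℝ) (n - 1) htn).mul_right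
    ((1 / (1 + x)) ^ n)
  have h1t : (1:ℝ) - x / (1 + x) = 1 / (1 + x) := by field_simp; ring
  rw [h1t, hexp] at H
  have hS : (1:ℝ) / (1 / (1 + x)) ^ n * (1 / (1 + x)) ^ n = 1 := by
    rw [one_div (1 + x), inv_pow, one_div, inv_inv, mul_inv_cancel₀ (pow_ne_zero _ hxne)]
  rw [hS] at H
  refine H.congr_fun fun k => ?_
  have hc : n + k - 1 = k + (n - 1) := by omega
  unfold bask
  rw [hc, Nat.choose_symm_add, div_pow, one_div, inv_pow, pow_add]
  ring

lemma bask_le_one (n : ℕ) (hn : 1 ≤ n) {x : ℝ} (hx : 0 ≤ x) (k : ℕ) : bask n x k ≤ 1 := by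
  have h := bask_hasSum_one n hn hx
  have := Summable.le_tsum h.summable k (fun j _ => bask_nonneg n hx j)
  rwa [h.tsum_eq] at this

lemma bask_sq_summable (n : ℕ) (hn : 1 ≤ n) {x : ℝ} (hx : 0 ≤ x) :
    Summable (fun k => (bask n x k) ^ 2) :=
  Summable.of_nonneg_of_le (fun k => sq_nonneg _)
    (fun k => by nlinarith [bask_nonneg n hx k, bask_le_one n hn hx k])
    (bask_hasSum_one n hn hx).summable

lemma bask_theta_hasSum (n : ℕ) (hn : 1 ≤ n) {x : ℝ} (hx : 0 ≤ x) :
    HasSum (fun k => (bask n x k) ^ 2) (baskakovTheta n x) := by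
  have hx1 : (0:ℝ) < 1 + x := by linarith
  have hxne : (1:ℝ) + x ≠ 0 := hx1.ne'
  have hsq : ∀ k : ℕ, (bask n x k) ^ 2 =
      (1 / (1 + x) ^ (2 * n)) * (((n + k - 1).choose k : ℝ) ^ 2 * (x / (1 + x)) ^ (2 * k)) := by
    intro k
    unfold bask
    rw [div_pow, mul_pow, ← pow_mul, ← pow_mul, div_pow,
      show (n + k) * 2 = 2 * n + 2 * k by ring, show k * 2 = 2 * k by ring, pow_add]
    field_simp
  have heq : baskakovTheta n x = ∑' k, (bask n x k) ^ 2 := by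
    unfold baskakovTheta
    rw [← tsum_mul_left]
    exact (tsum_congr fun k => (hsq k).symm)
  rw [heq]
  exact (bask_sq_summable n hn hx).hasSum

set_option maxHeartbeats 1000000 in
/-- Generic Chebyshev–Grüss argument for a discrete positive functional with total mass 1. -/
lemma key_gruss (a F G : ℕ → ℝ) (θ Sf Sg Cf Cg : ℝ)
    (ha1 : HasSum a 1) (ha0 : ∀ k, 0 ≤ a k)
    (hθ : HasSum (fun k => (a k) ^ 2) θ)
    (hF : ∀ k, |F k| ≤ Cf) (hG : ∀ k, |G k| ≤ Cg)
    (hSf0 : 0 ≤ Sf) (hSg0 : 0 ≤ Sg)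
    (hSfle : ∀ k l, k ≠ l → |F k - F l| ≤ Sf)
    (hSgle : ∀ k l, k ≠ l → |G k - G l| ≤ Sg) :
    |(∑' k, F k * G k * a k) - (∑' k, F k * a k) * (∑' k, G k * a k)| ≤
      (1 / 2) * (1 - θ) * Sf * Sg := by
  have hCf0 : 0 ≤ Cf := (abs_nonneg _).trans (hF 0)
  have hCg0 : 0 ≤ Cg := (abs_nonneg _).trans (hG 0)
  have hsa := ha1.summable
  -- summability of weighted sums
  have habs : ∀ (u : ℕ → ℝ) (B : ℝ), (∀ k, |u k| ≤ B) → ∀ k, ‖u k * a k‖ ≤ B * a k := by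
    intro u B hB k
    rw [Real.norm_eq_abs, abs_mul, abs_of_nonneg (ha0 k)]
    exact mul_le_mul_of_nonneg_right (hB k) (ha0 k)
  have hFG : ∀ k, |F k * G k| ≤ Cf * Cg := fun k => by
    rw [abs_mul]; exact mul_le_mul (hF k) (hG k) (abs_nonneg _) hCf0
  have hsaF : Summable (fun k => F k * a k) :=
    Summable.of_norm_bounded (hsa.mul_left Cf) (habs F Cf hF)
  have hsaG : Summable (fun k => G k * a k) :=
    Summable.of_norm_bounded (hsa.mul_left Cg) (habs G Cg hG)
  have hsaFG : Summable (fun k => F k * G k * a k) :=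
    Summable.of_norm_bounded (hsa.mul_left (Cf * Cg)) (habs _ _ hFG)
  -- summability of pair products
  have hsaa : Summable (fun p : ℕ × ℕ => a p.1 * a p.2) :=
    hsa.mul_of_nonneg hsa (fun k => ha0 k) (fun k => ha0 k)
  have hpair : ∀ (u v : ℕ → ℝ) (Bu Bv : ℝ), (∀ k, |u k| ≤ Bu * a k) → (∀ k, |v k| ≤ Bv * a k) →
      Summable (fun p : ℕ × ℕ => u p.1 * v p.2) := by
    intro u v Bu Bv hu hv
    refine Summable.of_norm_bounded (hsaa.mul_left (Bu * Bv) :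
      Summable (fun p : ℕ × ℕ => Bu * Bv * (a p.1 * a p.2))) ?_
    intro p
    rw [Real.norm_eq_abs, abs_mul]
    calc |u p.1| * |v p.2| ≤ (Bu * a p.1) * (Bv * a p.2) :=
          mul_le_mul (hu p.1) (hv p.2) (abs_nonneg _) ((abs_nonneg _).trans (hu p.1))
      _ = Bu * Bv * (a p.1 * a p.2) := by ring
  have habsF : ∀ k, |F k * a k| ≤ Cf * a k := fun k => by
    have := habs F Cf hF k; rwa [Real.norm_eq_abs] at this
  have habsG : ∀ k, |G k * a k| ≤ Cg * a k := fun k => by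
    have := habs G Cg hG k; rwa [Real.norm_eq_abs] at this
  have habsFG : ∀ k, |F k * G k * a k| ≤ Cf * Cg * a k := fun k => by
    have := habs _ _ hFG k; rwa [Real.norm_eq_abs] at this
  have habsa : ∀ k, |a k| ≤ 1 * a k := fun k => by
    rw [abs_of_nonneg (ha0 k), one_mul]
  -- the four double sums
  have h1 : HasSum (fun p : ℕ × ℕ => (F p.1 * G p.1 * a p.1) * a p.2)
      ((∑' k, F k * G k * a k) * 1) :=
    hsaFG.hasSum.mul ha1 (hpair (fun k => F k * G k * a k) a (Cf * Cg) 1 habsFG habsa)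
  have h2 : HasSum (fun p : ℕ × ℕ => (F p.1 * a p.1) * (G p.2 * a p.2))
      ((∑' k, F k * a k) * (∑' k, G k * a k)) :=
    hsaF.hasSum.mul hsaG.hasSum (hpair (fun k => F k * a k) (fun k => G k * a k) Cf Cg habsF habsG)
  have h3 : HasSum (fun p : ℕ × ℕ => (G p.1 * a p.1) * (F p.2 * a p.2))
      ((∑' k, G k * a k) * (∑' k, F k * a k)) :=
    hsaG.hasSum.mul hsaF.hasSum (hpair (fun k => G k * a k) (fun k => F k * a k) Cg Cf habsG habsF)
  have h4 : HasSum (fun p : ℕ × ℕ => a p.1 * (F p.2 * G p.2 * a p.2))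
      (1 * (∑' k, F k * G k * a k)) :=
    ha1.mul hsaFG.hasSum (hpair a (fun k => F k * G k * a k) 1 (Cf * Cg) habsa habsFG)
  set h : ℕ × ℕ → ℝ := fun p => a p.1 * a p.2 * (F p.1 - F p.2) * (G p.1 - G p.2) with hh
  have hkey : HasSum h
      ((∑' k, F k * G k * a k) * 1 - (∑' k, F k * a k) * (∑' k, G k * a k)
        - (∑' k, G k * a k) * (∑' k, F k * a k) + 1 * (∑' k, F k * G k * a k)) := by
    refine (((h1.sub h2).sub h3).add h4).congr_fun fun p => ?_
    simp only [hh]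
    ring
  -- diagonal sum
  set d : ℕ × ℕ → ℝ := fun p => if p.1 = p.2 then Sf * Sg * (a p.1 * a p.2) else 0 with hd
  have hdiaginj : Function.Injective (fun k : ℕ => ((k, k) : ℕ × ℕ)) := by
    intro a b hab
    exact (Prod.ext_iff.1 hab).1
  have hdiag : HasSum d (Sf * Sg * θ) := by
    rw [← Function.Injective.hasSum_iff hdiaginj ?_]
    · refine (hθ.mul_left (Sf * Sg)).congr_fun fun k => ?_
      simp only [hd, Function.comp, if_pos rfl, sq]
    · intro p hp
      have : p.1 ≠ p.2 := by
        intro hpe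
        exact hp ⟨p.1, Prod.ext rfl hpe⟩
      simp only [hd, if_neg this]
  set B : ℕ × ℕ → ℝ := fun p => if p.1 = p.2 then 0 else Sf * Sg * (a p.1 * a p.2) with hB
  have haa1 : HasSum (fun p : ℕ × ℕ => a p.1 * a p.2) 1 := by
    have := ha1.mul ha1 hsaa
    rwa [mul_one] at this
  have hBsum : HasSum B (Sf * Sg - Sf * Sg * θ) := by
    have H := (haa1.mul_left (Sf * Sg)).sub hdiag
    rw [mul_one] at H
    refine H.congr_fun fun p => ?_
    by_cases hp : p.1 = p.2
    · simp [hB, hd, hp]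
    · simp [hB, hd, hp]
  have hnorm : ∀ p : ℕ × ℕ, ‖h p‖ ≤ B p := by
    intro p
    by_cases hp : p.1 = p.2
    · simp [hh, hB, hp]
    · rw [hB]
      simp only [if_neg hp]
      rw [hh]
      simp only []
      rw [Real.norm_eq_abs, abs_mul, abs_mul, abs_mul,
        abs_of_nonneg (ha0 p.1), abs_of_nonneg (ha0 p.2)]
      calc a p.1 * a p.2 * |F p.1 - F p.2| * |G p.1 - G p.2|
          ≤ a p.1 * a p.2 * Sf * Sg := by
            have hfa := hSfle p.1 p.2 hp
            have hga := hSgle p.1 p.2 hp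
            have haa : 0 ≤ a p.1 * a p.2 := mul_nonneg (ha0 p.1) (ha0 p.2)
            have s1 : a p.1 * a p.2 * |F p.1 - F p.2| ≤ a p.1 * a p.2 * Sf :=
              mul_le_mul_of_nonneg_left hfa haa
            exact mul_le_mul s1 hga (abs_nonneg _)
              (mul_nonneg haa hSf0)
        _ = Sf * Sg * (a p.1 * a p.2) := by ring
  have hnormsum : Summable (fun p => ‖h p‖) :=
    Summable.of_nonneg_of_le (fun _ => norm_nonneg _) hnorm hBsum.summable
  have hfinal : |∑' p, h p| ≤ Sf * Sg - Sf * Sg * θ := by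
    calc |∑' p, h p| = ‖∑' p, h p‖ := (Real.norm_eq_abs _).symm
      _ ≤ ∑' p, ‖h p‖ := norm_tsum_le_tsum_norm hnormsum
      _ ≤ ∑' p, B p := Summable.tsum_le_tsum hnorm hnormsum hBsum.summable
      _ = Sf * Sg - Sf * Sg * θ := hBsum.tsum_eq
  rw [hkey.tsum_eq] at hfinal
  have habs2 : |2 * ((∑' k, F k * G k * a k) - (∑' k, F k * a k) * (∑' k, G k * a k))| =
      2 * |(∑' k, F k * G k * a k) - (∑' k, F k * a k) * (∑' k, G k * a k)| := by
    rw [abs_mul, abs_two]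
  have hre : (∑' k, F k * G k * a k) * 1 - (∑' k, F k * a k) * (∑' k, G k * a k)
        - (∑' k, G k * a k) * (∑' k, F k * a k) + 1 * (∑' k, F k * G k * a k)
      = 2 * ((∑' k, F k * G k * a k) - (∑' k, F k * a k) * (∑' k, G k * a k)) := by ring
  rw [hre, habs2] at hfinal
  have : (1 / 2 : ℝ) * (1 - θ) * Sf * Sg = (Sf * Sg - Sf * Sg * θ) / 2 := by ring
  rw [this]
  linarith

set_option maxHeartbeats 1000000 in
/-- The new Chebyshev-Grüss-type inequality for the Baskakov operator. -/
theorem baskakov_chebyshev_gruss (n : ℕ) (hn : 1 ≤ n)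
    (f g : ℝ → ℝ)
    (hf : ContinuousOn f (Set.Ici (0:ℝ))) (hg : ContinuousOn g (Set.Ici (0:ℝ)))
    (hfb : ∃ C, ∀ y ∈ Set.Ici (0:ℝ), |f y| ≤ C) (hgb : ∃ C, ∀ y ∈ Set.Ici (0:ℝ), |g y| ≤ C)
    (x : ℝ) (hx : 0 ≤ x) :
    |baskakovOp n (fun t => f t * g t) x - baskakovOp n f x * baskakovOp n g x| ≤
      (1 / 2) * (1 - baskakovTheta n x) *
        sSup {d : ℝ | ∃ k l : ℕ, k < l ∧ d = |f (k / n) - f (l / n)|} *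
        sSup {d : ℝ | ∃ k l : ℕ, k < l ∧ d = |g (k / n) - g (l / n)|} := by
  obtain ⟨Cf, hCf⟩ := hfb
  obtain ⟨Cg, hCg⟩ := hgb
  have hm : ∀ k : ℕ, ((k : ℝ) / (n : ℝ)) ∈ Set.Ici (0:ℝ) := fun k =>
    Set.mem_Ici.mpr (div_nonneg (Nat.cast_nonneg k) (Nat.cast_nonneg n))
  have hFb : ∀ k : ℕ, |f (k / n)| ≤ Cf := fun k => hCf _ (hm k)
  have hGb : ∀ k : ℕ, |g (k / n)| ≤ Cg := fun k => hCg _ (hm k)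
  have hopfg : baskakovOp n (fun t => f t * g t) x
      = ∑' k : ℕ, f (k / n) * g (k / n) * bask n x k := by
    unfold baskakovOp bask
    exact tsum_congr fun k => by ring
  have hopf : baskakovOp n f x = ∑' k : ℕ, f (k / n) * bask n x k := by
    unfold baskakovOp bask
    exact tsum_congr fun k => by ring
  have hopg : baskakovOp n g x = ∑' k : ℕ, g (k / n) * bask n x k := by
    unfold baskakovOp bask
    exact tsum_congr fun k => by ring
  have hDfbdd : BddAbove {d : ℝ | ∃ k l : ℕ, k < l ∧ d = |f (k / n) - f (l / n)|} := by
    refine ⟨Cf + Cf, ?_⟩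
    rintro d ⟨k, l, -, rfl⟩
    rw [sub_eq_add_neg]
    exact (abs_add_le _ _).trans (by rw [abs_neg]; exact add_le_add (hFb k) (hFb l))
  have hDgbdd : BddAbove {d : ℝ | ∃ k l : ℕ, k < l ∧ d = |g (k / n) - g (l / n)|} := by
    refine ⟨Cg + Cg, ?_⟩
    rintro d ⟨k, l, -, rfl⟩
    rw [sub_eq_add_neg]
    exact (abs_add_le _ _).trans (by rw [abs_neg]; exact add_le_add (hGb k) (hGb l))
  have hSf0 : 0 ≤ sSup {d : ℝ | ∃ k l : ℕ, k < l ∧ d = |f (k / n) - f (l / n)|} :=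
    (abs_nonneg _).trans (le_csSup hDfbdd ⟨0, 1, Nat.zero_lt_one, rfl⟩)
  have hSg0 : 0 ≤ sSup {d : ℝ | ∃ k l : ℕ, k < l ∧ d = |g (k / n) - g (l / n)|} :=
    (abs_nonneg _).trans (le_csSup hDgbdd ⟨0, 1, Nat.zero_lt_one, rfl⟩)
  have hSfle : ∀ k l : ℕ, k ≠ l → |f (k / n) - f (l / n)| ≤
      sSup {d : ℝ | ∃ k l : ℕ, k < l ∧ d = |f (k / n) - f (l / n)|} := by
    intro k l hkl
    rcases hkl.lt_or_gt with h | h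
    · exact le_csSup hDfbdd ⟨k, l, h, rfl⟩
    · rw [abs_sub_comm]
      exact le_csSup hDfbdd ⟨l, k, h, rfl⟩
  have hSgle : ∀ k l : ℕ, k ≠ l → |g (k / n) - g (l / n)| ≤
      sSup {d : ℝ | ∃ k l : ℕ, k < l ∧ d = |g (k / n) - g (l / n)|} := by
    intro k l hkl
    rcases hkl.lt_or_gt with h | h
    · exact le_csSup hDgbdd ⟨k, l, h, rfl⟩
    · rw [abs_sub_comm]
      exact le_csSup hDgbdd ⟨l, k, h, rfl⟩
  rw [hopfg, hopf, hopg]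
  exact key_gruss (bask n x) (fun k : ℕ => f (k / n)) (fun k : ℕ => g (k / n))
    (baskakovTheta n x)
    (sSup {d : ℝ | ∃ k l : ℕ, k < l ∧ d = |f (k / n) - f (l / n)|})
    (sSup {d : ℝ | ∃ k l : ℕ, k < l ∧ d = |g (k / n) - g (l / n)|})
    Cf Cg (bask_hasSum_one n hn hx) (bask_nonneg n hx) (bask_theta_hasSum n hn hx)
    hFb hGb hSf0 hSg0 hSfle hSgle
end

section
/- For every fixed n ≥ 1, setting ϑ_n(x) := (1+x)^{−2n} ∑_{k=0}^∞ C(n+k−1,k)²·(x/(1+x))^{2k} for x ≥ 0, one has inf_{x ≥ 0} ϑ_n(x) = 0. In particular ϑ_1(x) = 1/(1+2x) and ϑ_2(x) = (2x²+2x+1)/(2x+1)³, both of which tend to 0 as x → ∞. -/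
open Filter

lemma choose_sq_le_vandermonde (m k : ℕ) :
    ((m + k).choose k) ^ 2 ≤ (2 * k + 2 * m).choose (2 * m) := by
  have h1 : (2 * k + 2 * m).choose (2 * m) = (2 * k + 2 * m).choose (2 * k) := by
    rw [show 2 * k + 2 * m = 2 * m + 2 * k by ring, Nat.choose_symm_add,
      show 2 * m + 2 * k = 2 * k + 2 * m by ring]
  have h2 : ((m + k) + (m + k)).choose (2 * k) =
      ∑ ij ∈ Finset.HasAntidiagonal.antidiagonal (2 * k), (m + k).choose ij.1 * (m + k).choose ij.2 :=
    Nat.add_choose_eq _ _ _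
  have hmem : ((k, k) : ℕ × ℕ) ∈ Finset.HasAntidiagonal.antidiagonal (2 * k) := by
    simp [Finset.mem_antidiagonal]; ring
  have h3 : (m + k).choose k * (m + k).choose k ≤
      ∑ ij ∈ Finset.HasAntidiagonal.antidiagonal (2 * k), (m + k).choose ij.1 * (m + k).choose ij.2 :=
    Finset.single_le_sum (f := fun ij : ℕ × ℕ =>
        (m + k).choose ij.1 * (m + k).choose ij.2)
        (fun _ _ => Nat.zero_le _) hmem
  calc ((m + k).choose k) ^ 2 = (m + k).choose k * (m + k).choose k := sq _
    _ ≤ ((m + k) + (m + k)).choose (2 * k) := h2 ▸ h3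
    _ = (2 * k + 2 * m).choose (2 * k) := by rw [show (m + k) + (m + k) = 2 * k + 2 * m by ring]
    _ = (2 * k + 2 * m).choose (2 * m) := h1.symm

lemma baskakovTheta_bounds (n : ℕ) (hn : 1 ≤ n) (x : ℝ) (hx : 0 ≤ x) :
    0 ≤ baskakovTheta n x ∧ baskakovTheta n x ≤ 1 / (1 + x) := by
  obtain ⟨m, rfl⟩ : ∃ m, n = m + 1 := ⟨n - 1, by omega⟩
  have hx1 : (0:ℝ) < 1 + x := by linarith
  set q : ℝ := x / (1 + x) with hq
  have hq0 : 0 ≤ q := div_nonneg hx hx1.le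
  have hq1 : q < 1 := (div_lt_one hx1).mpr (by linarith)
  have hqn : ‖q‖ < 1 := by rw [Real.norm_eq_abs, abs_of_nonneg hq0]; exact hq1
  -- the function inside the tsum
  have hidx : ∀ k : ℕ, (m + 1 + k - 1) = m + k := fun k => by omega
  set f : ℕ → ℝ := fun k => ((m + 1 + k - 1).choose k : ℝ) ^ 2 * q ^ (2 * k) with hf
  have hfnn : ∀ k, 0 ≤ f k := fun k =>
    mul_nonneg (sq_nonneg _) (pow_nonneg hq0 _)
  -- majorant series
  set G : ℕ → ℝ := fun j => ((j + 2 * m).choose (2 * m) : ℝ) * q ^ j with hG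
  have hGsum : Summable G := summable_choose_mul_geometric_of_norm_lt_one (2 * m) hqn
  have hGnn : ∀ j, 0 ≤ G j :=
    fun j => mul_nonneg (Nat.cast_nonneg _) (pow_nonneg hq0 _)
  have hinj : Function.Injective (fun k : ℕ => 2 * k) := by
    intro a b h
    simp only at h
    omega
  have hle : ∀ k, f k ≤ G (2 * k) := by
    intro k
    simp only [hf, hG, hidx k]
    apply mul_le_mul_of_nonneg_right _ (pow_nonneg hq0 _)
    rw [← Nat.cast_pow]
    exact_mod_cast choose_sq_le_vandermonde m k
  have hfsum : Summable f := by
    apply Summable.of_nonneg_of_le hfnn hle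
    exact hGsum.comp_injective hinj
  have hGval : ∑' j, G j = (1 + x) ^ (2 * m + 1) := by
    rw [hG]
    rw [tsum_choose_mul_geometric_of_norm_lt_one (2 * m) hqn]
    have h1q : 1 - q = 1 / (1 + x) := by
      rw [hq]; field_simp; ring
    rw [h1q, div_pow, one_pow, one_div, one_div, inv_inv]
  have htsum_le : ∑' k, f k ≤ (1 + x) ^ (2 * m + 1) := by
    rw [← hGval]
    exact Summable.tsum_le_tsum_of_inj _ hinj (fun c _ => hGnn c) hle hfsum hGsum
  have htheta : baskakovTheta (m + 1) x = (1 / (1 + x) ^ (2 * (m + 1))) * ∑' k, f k := rfl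
  constructor
  · rw [htheta]
    exact mul_nonneg (by positivity) (tsum_nonneg hfnn)
  · rw [htheta]
    have hpow : (1 + x) ^ (2 * (m + 1)) = (1 + x) ^ (2 * m + 1) * (1 + x) := by
      rw [← pow_succ]; ring_nf
    calc (1 / (1 + x) ^ (2 * (m + 1))) * ∑' k, f k
        ≤ (1 / (1 + x) ^ (2 * (m + 1))) * (1 + x) ^ (2 * m + 1) :=
          mul_le_mul_of_nonneg_left htsum_le (by positivity)
      _ = 1 / (1 + x) := by
          rw [hpow]; field_simp
  
lemma tendsto_one_div_one_add : Tendsto (fun x : ℝ => 1 / (1 + x)) atTop (nhds 0) := by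
  simp only [one_div]
  exact (tendsto_atTop_add_const_left _ 1 tendsto_id).inv_tendsto_atTop

lemma baskakovTheta_tendsto (n : ℕ) (hn : 1 ≤ n) :
    Tendsto (fun x => baskakovTheta n x) atTop (nhds 0) := by
  apply squeeze_zero' (g := fun x : ℝ => 1 / (1 + x))
  · filter_upwards [eventually_ge_atTop (0:ℝ)] with x hx
    exact (baskakovTheta_bounds n hn x hx).1
  · filter_upwards [eventually_ge_atTop (0:ℝ)] with x hx
    exact (baskakovTheta_bounds n hn x hx).2
  · exact tendsto_one_div_one_add

lemma two_mul_choose_two (k : ℕ) : 2 * ((k + 2).choose 2) = (k + 2) * (k + 1) := by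
  have he : 2 ∣ (k + 2) * (k + 1) := by
    rw [mul_comm]
    exact (Nat.even_mul_succ_self (k + 1)).two_dvd
  rw [Nat.choose_two_right, show k + 2 - 1 = k + 1 from rfl, Nat.mul_div_cancel' he]

/-- For fixed `n ≥ 1`, `inf_{x ≥ 0} ϑ_n(x) = 0`; in particular `ϑ_1(x) = 1/(1+2x)` and
`ϑ_2(x) = (2x²+2x+1)/(2x+1)³`, both of which tend to `0` as `x → ∞`. -/
theorem baskakovTheta_inf_zero (n : ℕ) (hn : 1 ≤ n) :
    sInf {y : ℝ | ∃ x : ℝ, 0 ≤ x ∧ y = baskakovTheta n x} = 0 ∧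
    (∀ x : ℝ, 0 ≤ x → baskakovTheta 1 x = 1 / (1 + 2 * x)) ∧
    (∀ x : ℝ, 0 ≤ x → baskakovTheta 2 x = (2 * x ^ 2 + 2 * x + 1) / (2 * x + 1) ^ 3) ∧
    Tendsto (fun x => baskakovTheta 1 x) atTop (nhds 0) ∧
    Tendsto (fun x => baskakovTheta 2 x) atTop (nhds 0) := by
  refine ⟨?_, ?_, ?_, baskakovTheta_tendsto 1 le_rfl, baskakovTheta_tendsto 2 one_le_two⟩
  · -- sInf = 0
    set S := {y : ℝ | ∃ x : ℝ, 0 ≤ x ∧ y = baskakovTheta n x} with hS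
    have hne : S.Nonempty := ⟨baskakovTheta n 0, 0, le_rfl, rfl⟩
    have hlb : ∀ y ∈ S, (0:ℝ) ≤ y := by
      rintro y ⟨x, hx, rfl⟩
      exact (baskakovTheta_bounds n hn x hx).1
    have hbdd : BddBelow S := ⟨0, hlb⟩
    refine le_antisymm ?_ (le_csInf hne hlb)
    have hub : ∀ x : ℝ, 0 ≤ x → sInf S ≤ 1 / (1 + x) := fun x hx =>
      (csInf_le hbdd ⟨x, hx, rfl⟩).trans (baskakovTheta_bounds n hn x hx).2
    refine ge_of_tendsto tendsto_one_div_one_add ?_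
    filter_upwards [eventually_ge_atTop (0:ℝ)] with x hx using hub x hx
  · -- n = 1
    intro x hx
    have hx1 : (0:ℝ) < 1 + x := by linarith
    have hq1 : x / (1 + x) < 1 := (div_lt_one hx1).mpr (by linarith)
    have hq0 : 0 ≤ x / (1 + x) := div_nonneg hx hx1.le
    have hr1 : (x / (1 + x)) ^ 2 < 1 := by nlinarith
    have hr0 : 0 ≤ (x / (1 + x)) ^ 2 := sq_nonneg _
    have hts : ∑' k : ℕ, ((1 + k - 1).choose k : ℝ) ^ 2 * (x / (1 + x)) ^ (2 * k)
        = (1 - (x / (1 + x)) ^ 2)⁻¹ := by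
      rw [← tsum_geometric_of_lt_one hr0 hr1]
      congr 1; funext k
      rw [show 1 + k - 1 = k by omega, Nat.choose_self, pow_mul]
      simp
    rw [baskakovTheta, hts]
    have h1 : 1 - (x / (1 + x)) ^ 2 = (1 + 2 * x) / (1 + x) ^ 2 := by
      field_simp; ring
    rw [h1]
    have h2x : (0:ℝ) < 1 + 2 * x := by linarith
    field_simp
  · -- n = 2
    intro x hx
    have hx1 : (0:ℝ) < 1 + x := by linarith
    have hq1 : x / (1 + x) < 1 := (div_lt_one hx1).mpr (by linarith)
    have hq0 : 0 ≤ x / (1 + x) := div_nonneg hx hx1.le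
    set r : ℝ := (x / (1 + x)) ^ 2 with hrdef
    have hrn : ‖r‖ < 1 := by
      rw [Real.norm_eq_abs, abs_of_nonneg (sq_nonneg _)]; nlinarith
    have h2 := hasSum_choose_mul_geometric_of_norm_lt_one (𝕜 := ℝ) 2 hrn
    have h1 := hasSum_choose_mul_geometric_of_norm_lt_one (𝕜 := ℝ) 1 hrn
    have hsum : HasSum (fun k : ℕ => ((2 + k - 1).choose k : ℝ) ^ 2 * (x / (1 + x)) ^ (2 * k))
        (2 * (1 / (1 - r) ^ 3) - 1 / (1 - r) ^ 2) := by
      have hs := (h2.mul_left 2).sub h1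
      convert hs using 1
      · rfl
      funext k
      have hc : (2:ℝ) * ((k + 2).choose 2 : ℝ) = ((k:ℝ) + 2) * ((k:ℝ) + 1) := by
        exact_mod_cast two_mul_choose_two k
      rw [show 2 + k - 1 = k + 1 by omega, Nat.choose_succ_self_right,
        Nat.choose_one_right, pow_mul, ← hrdef]
      push_cast
      linear_combination (-(r ^ k)) * hc
    rw [baskakovTheta, hsum.tsum_eq]
    have h1r : 1 - r = (1 + 2 * x) / (1 + x) ^ 2 := by
      rw [hrdef]; field_simp; ring
    rw [h1r]
    have h2x : (0:ℝ) < 1 + 2 * x := by linarith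
    have h2x' : (0:ℝ) < 2 * x + 1 := by linarith
    field_simp
    ring
end

section
/- Let V*_1 be the King operator for n = 1, defined by V*_1 f(x) := (1 − x²)·f(0) + x²·f(1) for f : [0,1] → ℝ and x ∈ [0,1]. Then for all f, g : [0,1] → ℝ and all x ∈ [0,1], |V*_1(f·g)(x) − V*_1 f(x)·V*_1 g(x)| ≤ (1/4)·|f(0) − f(1)|·|g(0) − g(1)|. -/
/-- The King operator for `n = 1`: `V*₁ f(x) = (1 - x²) f(0) + x² f(1)`. -/
noncomputable def kingOp1 (f : ℝ → ℝ) (x : ℝ) : ℝ :=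
  (1 - x ^ 2) * f 0 + x ^ 2 * f 1

/-- The new Chebyshev-Grüss-type inequality for the King operator with `n = 1`. -/
theorem king1_chebyshev_gruss (f g : ℝ → ℝ) (x : ℝ) (hx : x ∈ Set.Icc (0:ℝ) 1) :
    |kingOp1 (fun t => f t * g t) x - kingOp1 f x * kingOp1 g x| ≤
      (1 / 4) * |f 0 - f 1| * |g 0 - g 1| := by
  obtain ⟨h0, h1⟩ := hx
  have key : kingOp1 (fun t => f t * g t) x - kingOp1 f x * kingOp1 g x =
      (x ^ 2 * (1 - x ^ 2)) * ((f 0 - f 1) * (g 0 - g 1)) := by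
    simp only [kingOp1]; ring
  rw [key, abs_mul, abs_mul (f 0 - f 1)]
  have hb : |x ^ 2 * (1 - x ^ 2)| ≤ 1 / 4 := by
    rw [abs_le]; constructor <;> nlinarith [sq_nonneg (x ^ 2 - 1 / 2), sq_nonneg x, sq_nonneg (1 - x ^ 2), mul_nonneg (sq_nonneg x) (show (0:ℝ) ≤ 1 - x ^ 2 by nlinarith)]
  calc |x ^ 2 * (1 - x ^ 2)| * (|f 0 - f 1| * |g 0 - g 1|)
      ≤ 1 / 4 * (|f 0 - f 1| * |g 0 - g 1|) := by
        apply mul_le_mul_of_nonneg_right hb (by positivity)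
    _ = 1 / 4 * |f 0 - f 1| * |g 0 - g 1| := by ring
end
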